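/- arXiv:math/0609145 — 6 statements merged into one kernel-verified Lean document; each statement's English description precedes it below -/
import Mathlib

section
/- Let h : ℝ → ℝ be r times continuously differentiable on an interval I, with |h^(r)(t)| ≥ κ > 0 for all t ∈ I. Then for every ħ > 0, the sublevel set I^ħ = {t ∈ I : |h(t)| < ħ} has Lebesgue measure at most 2^(r-1) · (2·r!/κ)^(1/r) · ħ^(1/r). -/
open MeasureTheory

section SublevelHelpers

open Polynomial Finset Set MeasureTheory


lemma poly_contDiff (p : Polynomial ℝ) (n : ℕ∞) : ContDiff ℝ n fun x : ℝ => p.eval x := by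
  induction p using Polynomial.induction_on' with
  | add p q hp hq => simpa [Polynomial.eval_add] using hp.add hq
  | monomial k a =>
      simpa [Polynomial.eval_monomial] using (contDiff_const (c := a)).mul (contDiff_id.pow k)

lemma poly_iteratedDerivWithin (n : ℕ) (p : Polynomial ℝ) (s : Set ℝ)
    (hs : UniqueDiffOn ℝ s) : ∀ x ∈ s,
    iteratedDerivWithin n (fun y => p.eval y) s x = (Polynomial.derivative^[n] p).eval x := by
  induction n generalizing p with
  | zero => intro x hx; simp
  | succ n IH =>
      intro x hx
      rw [iteratedDerivWithin_succ']
      have h1 : Set.EqOn (derivWithin (fun y => p.eval y) s) (fun y => p.derivative.eval y) s :=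
        fun y hy => p.derivWithin (hs.uniqueDiffWithinAt hy)
      have := iteratedDerivWithin_congr (n := n) h1 hx
      rw [this, IH p.derivative x hx, ← Function.iterate_succ_apply]

lemma nat_aux : ∀ r : ℕ, 1 ≤ r → r ^ r ≤ 2 ^ ((r-1)*(r-1)) * r.factorial := by
  intro r
  induction r with
  | zero => omega
  | succ r IH =>
    intro _
    rcases Nat.eq_zero_or_pos r with h0 | hr
    · subst h0; simp
    have h1 : (r+1)^(r+1) = (r+1) * (r+1)^r := by ring
    have h2 : (r+1)^r ≤ 2^r * r^r := by
      rw [← mul_pow]; exact Nat.pow_le_pow_left (by omega) r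
    have h3 : r^r ≤ 2^((r-1)*(r-1)) * r.factorial := IH hr
    calc (r+1)^(r+1) = (r+1) * (r+1)^r := h1
      _ ≤ (r+1) * (2^r * r^r) := Nat.mul_le_mul_left _ h2
      _ ≤ (r+1) * (2^r * (2^((r-1)*(r-1)) * r.factorial)) := by
          exact Nat.mul_le_mul_left _ (Nat.mul_le_mul_left _ h3)
      _ = 2^(r + (r-1)*(r-1)) * ((r+1) * r.factorial) := by rw [pow_add]; ring
      _ ≤ 2^(r*r) * (r+1).factorial := by
          rw [Nat.factorial_succ]
          obtain ⟨m, rfl⟩ := Nat.exists_eq_add_of_le hr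
          have : 1 + m + (1 + m - 1) * (1 + m - 1) ≤ (1 + m) * (1 + m) := by
            simp only [Nat.add_sub_cancel_left]; nlinarith
          exact Nat.mul_le_mul (Nat.pow_le_pow_right (by norm_num) this) le_rfl
      _ = 2^((r+1-1)*(r+1-1)) * (r+1).factorial := by simp

lemma rolle_iter (I : Set ℝ) (hI : I.OrdConnected) (hU : UniqueDiffOn ℝ I) :
    ∀ (k : ℕ) (f : ℝ → ℝ) (t : Fin (k+1) → ℝ), StrictMono t → (∀ j, t j ∈ I) →
    ContDiffOn ℝ k f I → (∀ j, f (t j) = 0) →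
    ∃ ξ ∈ Set.Icc (t 0) (t (Fin.last k)), iteratedDerivWithin k f I ξ = 0 := by
  intro k
  induction k with
  | zero =>
      intro f t _ htI _ hz
      exact ⟨t 0, ⟨le_refl _, le_of_eq (by rfl)⟩, by simpa using hz 0⟩
  | succ k IH =>
      intro f t hmono htI hsm hz
      have hIcc : ∀ j : Fin (k+1), Set.Icc (t j.castSucc) (t j.succ) ⊆ I := fun j =>
        hI.out (htI j.castSucc) (htI j.succ)
      have H : ∀ j : Fin (k+1), ∃ c ∈ Set.Ioo (t j.castSucc) (t j.succ), deriv f c = 0 := by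
        intro j
        exact exists_deriv_eq_zero (hmono (Fin.castSucc_lt_succ (i := j)))
          (hsm.continuousOn.mono (hIcc j)) (by rw [hz, hz])
      choose c hc1 hc2 using H
      have hcmono : StrictMono c := by
        rw [Fin.strictMono_iff_lt_succ]
        intro i
        calc c i.castSucc < t i.castSucc.succ := (hc1 i.castSucc).2
          _ = t i.succ.castSucc := by rw [Fin.succ_castSucc]
          _ < c i.succ := (hc1 i.succ).1
      have hcI : ∀ j, c j ∈ I := fun j => hIcc j (Set.Ioo_subset_Icc_self (hc1 j))
      have hcnhds : ∀ j, I ∈ nhds (c j) := fun j =>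
        mem_nhds_iff.2 ⟨Set.Ioo (t j.castSucc) (t j.succ),
          Set.Ioo_subset_Icc_self.trans (hIcc j), isOpen_Ioo, hc1 j⟩
      have hg : ContDiffOn ℝ k (derivWithin f I) I := by
        apply hsm.derivWithin hU
        norm_cast
      have hgz : ∀ j, derivWithin f I (c j) = 0 := fun j =>
        (derivWithin_of_mem_nhds (hcnhds j)).trans (hc2 j)
      obtain ⟨ξ, hξmem, hξ⟩ := IH (derivWithin f I) c hcmono hcI hg hgz
      have hsub : Set.Icc (c 0) (c (Fin.last k)) ⊆ Set.Icc (t 0) (t (Fin.last (k+1))) := by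
        apply Set.Icc_subset_Icc
        · exact le_of_lt (by simpa using (hc1 0).1)
        · have := (hc1 (Fin.last k)).2
          rw [Fin.succ_last] at this
          exact le_of_lt this
      have hξI : ξ ∈ I := hI.out (htI 0) (htI (Fin.last (k+1))) (hsub hξmem)
      refine ⟨ξ, hsub hξmem, ?_⟩
      rw [iteratedDerivWithin_succ']
      exact hξ

lemma iterate_deriv_eq_C (r : ℕ) (P : Polynomial ℝ) (hdeg : P.natDegree ≤ r) :
    Polynomial.derivative^[r] P = Polynomial.C ((r.factorial : ℝ) * P.coeff r) := by
  have h0 : (Polynomial.derivative^[r] P).natDegree ≤ 0 := by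
    have := Polynomial.natDegree_iterate_derivative P r
    omega
  rw [Polynomial.eq_C_of_natDegree_le_zero h0, Polynomial.coeff_iterate_derivative]
  simp [Nat.descFactorial_self, nsmul_eq_mul]

lemma interp_exists (r : ℕ) (t : ℕ → ℝ) (v : ℕ → ℝ)
    (hinj : ∀ i j, i ≤ r → j ≤ r → i ≠ j → t i ≠ t j) :
    ∃ P : Polynomial ℝ, P.natDegree ≤ r ∧ (∀ k ≤ r, P.eval (t k) = v k) ∧
      P.coeff r = ∑ j ∈ Finset.range (r+1),
        v j * (∏ i ∈ (Finset.range (r+1)).erase j, (t j - t i))⁻¹ := by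
  set Q : ℕ → Polynomial ℝ := fun j => ∏ i ∈ (Finset.range (r+1)).erase j, (X - C (t i)) with hQ
  have hQmonic : ∀ j, (Q j).Monic := fun j =>
    monic_prod_of_monic _ _ (fun i _ => monic_X_sub_C (t i))
  have hQdeg : ∀ j ∈ Finset.range (r+1), (Q j).natDegree = r := by
    intro j hj
    rw [hQ]
    rw [Polynomial.natDegree_prod_of_monic _ _ (fun i _ => monic_X_sub_C (t i))]
    simp [Finset.card_erase_of_mem hj]
  refine ⟨∑ j ∈ Finset.range (r+1),
      C (v j * (∏ i ∈ (Finset.range (r+1)).erase j, (t j - t i))⁻¹) * Q j, ?_, ?_, ?_⟩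
  · apply Polynomial.natDegree_sum_le_of_forall_le
    intro j hj
    exact (Polynomial.natDegree_C_mul_le _ _).trans (le_of_eq (hQdeg j hj))
  · intro k hk
    have hk' : k ∈ Finset.range (r+1) := Finset.mem_range.2 (by omega)
    rw [Polynomial.eval_finset_sum]
    rw [Finset.sum_eq_single k]
    · rw [Polynomial.eval_mul, Polynomial.eval_C, hQ]
      simp only [Polynomial.eval_prod, Polynomial.eval_sub, Polynomial.eval_X, Polynomial.eval_C]
      have hne : (∏ i ∈ (Finset.range (r+1)).erase k, (t k - t i)) ≠ 0 := by
        apply Finset.prod_ne_zero_iff.2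
        intro i hi
        have hi' := Finset.mem_of_mem_erase hi
        have : i ≠ k := Finset.ne_of_mem_erase hi
        have := hinj k i (by omega) (Nat.lt_succ_iff.1 (Finset.mem_range.1 hi')) (Ne.symm this)
        exact sub_ne_zero.2 this
      field_simp
    · intro j hj hjk
      rw [Polynomial.eval_mul, hQ]
      simp only [Polynomial.eval_prod, Polynomial.eval_sub, Polynomial.eval_X, Polynomial.eval_C]
      have hz : (∏ x ∈ (Finset.range (r+1)).erase j, (t k - t x)) = 0 :=
        Finset.prod_eq_zero (Finset.mem_erase.2 ⟨Ne.symm hjk, hk'⟩) (sub_self _)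
      rw [hz, mul_zero]
    · intro hkk; exact absurd hk' hkk
  · rw [Polynomial.finset_sum_coeff]
    apply Finset.sum_congr rfl
    intro j hj
    rw [Polynomial.coeff_C_mul]
    have : (Q j).coeff r = 1 := by
      have := (hQmonic j).coeff_natDegree
      rwa [hQdeg j hj] at this
    rw [this, mul_one]

lemma prod_fac_left (j : ℕ) : (∏ i ∈ Finset.range j, (j - i)) = j.factorial := by
  have h1 : ∀ i ∈ Finset.range j, j - i = (fun i => i + 1) (j - 1 - i) := by
    intro i hi
    have := Finset.mem_range.1 hi
    simp only
    omega
  rw [Finset.prod_congr rfl h1, Finset.prod_range_reflect (fun i => i + 1) j,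
    Finset.prod_range_add_one_eq_factorial]

lemma prod_fac_split (r j : ℕ) (hj : j ≤ r) :
    (∏ i ∈ (Finset.range (r+1)).erase j, (if i ≤ j then j - i else i - j)) =
      j.factorial * (r - j).factorial := by
  have hset : (Finset.range (r+1)).erase j = Finset.range j ∪ Finset.Ico (j+1) (r+1) := by
    ext i
    simp only [Finset.mem_erase, Finset.mem_range, Finset.mem_union, Finset.mem_Ico]
    omega
  have hdisj : Disjoint (Finset.range j) (Finset.Ico (j+1) (r+1)) := by
    rw [Finset.disjoint_left]
    intro i hi hi2
    simp only [Finset.mem_range] at hi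
    simp only [Finset.mem_Ico] at hi2
    omega
  rw [hset, Finset.prod_union hdisj]
  congr 1
  · rw [← prod_fac_left j]
    apply Finset.prod_congr rfl
    intro i hi
    have := Finset.mem_range.1 hi
    simp [le_of_lt this]
  · rw [Finset.prod_Ico_eq_prod_range]
    have h1 : ∀ i ∈ Finset.range (r+1-(j+1)), (if j+1+i ≤ j then j-(j+1+i) else j+1+i-j) = i+1 := by
      intro i hi
      rw [if_neg (by omega)]
      omega
    rw [Finset.prod_congr rfl h1, Finset.prod_range_add_one_eq_factorial]
    congr 1
    omega

lemma prod_gap (r : ℕ) (g : ℝ) (hg : 0 < g) (t : ℕ → ℝ)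
    (hgap : ∀ i j, i ≤ j → j ≤ r → ((j : ℝ) - i) * g ≤ t j - t i) :
    ∀ j ≤ r, g ^ r * ((j.factorial : ℝ) * ((r - j).factorial : ℝ))
      ≤ ∏ i ∈ (Finset.range (r+1)).erase j, |t j - t i| := by
  intro j hj
  set D : ℕ → ℕ := fun i => if i ≤ j then j - i else i - j with hD
  have hfac : ∀ i ∈ (Finset.range (r+1)).erase j, ((D i : ℝ)) * g ≤ |t j - t i| := by
    intro i hi
    have hir : i ≤ r := Nat.lt_succ_iff.1 (Finset.mem_range.1 (Finset.mem_of_mem_erase hi))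
    have hij : i ≠ j := Finset.ne_of_mem_erase hi
    rcases le_or_gt i j with hle | hlt
    · have h1 := hgap i j hle hj
      have : (D i : ℝ) = (j : ℝ) - i := by
        simp only [hD, if_pos hle]
        push_cast [Nat.cast_sub hle]
        ring
      rw [this]
      exact h1.trans (le_abs_self _)
    · have h1 := hgap j i (le_of_lt hlt) hir
      have : (D i : ℝ) = (i : ℝ) - j := by
        simp only [hD, if_neg (not_le.2 hlt)]
        push_cast [Nat.cast_sub (le_of_lt hlt)]
        ring
      rw [this]
      calc ((i:ℝ) - j) * g ≤ t i - t j := h1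
        _ ≤ |t i - t j| := le_abs_self _
        _ = |t j - t i| := abs_sub_comm _ _
  have hprod : (∏ i ∈ (Finset.range (r+1)).erase j, ((D i : ℝ) * g))
      ≤ ∏ i ∈ (Finset.range (r+1)).erase j, |t j - t i| := by
    apply Finset.prod_le_prod
    · intro i hi
      positivity
    · exact hfac
  refine le_trans (le_of_eq ?_) hprod
  rw [Finset.prod_mul_distrib, Finset.prod_const]
  rw [Finset.card_erase_of_mem (Finset.mem_range.2 (by omega)), Finset.card_range,
    Nat.add_sub_cancel]
  rw [← Nat.cast_prod, prod_fac_split r j hj]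
  push_cast
  ring

section sel
variable (E : Set ℝ)

noncomputable def Fm (x : ℝ) : ℝ := (volume (E ∩ Set.Ioi x)).toReal

variable (hfin : volume E ≠ ⊤)
include hfin

lemma Fm_le (x y : ℝ) (hxy : x ≤ y) : Fm E x ≤ Fm E y + (y - x) := by
  have hsub : E ∩ Set.Ioi x ⊆ (E ∩ Set.Ioi y) ∪ Set.Ioc x y := by
    intro z hz
    rcases le_or_gt z y with hb | hb
    · exact Or.inr ⟨hz.2, hb⟩
    · exact Or.inl ⟨hz.1, hb⟩
  have h1 : volume (E ∩ Set.Ioi x) ≤ volume (E ∩ Set.Ioi y) + volume (Set.Ioc x y) :=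
    le_trans (measure_mono hsub) (measure_union_le _ _)
  have h2 : volume (Set.Ioc x y) = ENNReal.ofReal (y - x) := by
    rw [Real.volume_Ioc]
  rw [h2] at h1
  have hfin1 : volume (E ∩ Set.Ioi y) ≠ ⊤ :=
    fun hc => hfin (top_unique (hc ▸ measure_mono Set.inter_subset_left))
  have := ENNReal.toReal_le_add h1 hfin1 (by simp)
  rwa [ENNReal.toReal_ofReal (by linarith)] at this

lemma Fm_anti : Antitone (Fm E) := by
  intro x y hxy
  apply ENNReal.toReal_mono
  · exact fun hc => hfin (top_unique (hc ▸ measure_mono Set.inter_subset_left))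
  · exact measure_mono (Set.inter_subset_inter_right _ (Set.Ioi_subset_Ioi hxy))

lemma Fm_cont : Continuous (Fm E) := by
  have : LipschitzWith 1 (Fm E) := by
    apply LipschitzWith.of_dist_le_mul
    intro x y
    rw [Real.dist_eq, Real.dist_eq, NNReal.coe_one, one_mul]
    rcases le_total x y with hxy | hxy
    · have h1 := Fm_le E hfin x y hxy
      have h2 := Fm_anti E hfin hxy
      have h3 : |x - y| = y - x := by rw [abs_sub_comm]; exact abs_of_nonneg (by linarith)
      rw [h3, abs_sub_le_iff]
      constructor <;> linarith
    · have h1 := Fm_le E hfin y x hxy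
      have h2 := Fm_anti E hfin hxy
      have h3 : |x - y| = x - y := abs_of_nonneg (by linarith)
      rw [h3, abs_sub_le_iff]
      constructor <;> linarith
  exact this.continuous

variable (b : ℝ) (hEb : E ⊆ Set.Iio b)
include hEb

lemma Fm_step (a : ℝ) (c : ℝ) (hc : 0 ≤ c) (hca : c < Fm E a) :
    ∃ τ, τ ∈ E ∩ Set.Ioi a ∧ c < Fm E τ := by
  have hFb : Fm E b = 0 := by
    have : E ∩ Set.Ioi b = ∅ := by
      ext z; simp only [Set.mem_inter_iff, Set.mem_Ioi, Set.mem_empty_iff_false, iff_false]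
      rintro ⟨hz, hzb⟩
      exact absurd (hEb hz) (not_lt.2 hzb.le)
    rw [Fm, this]; simp
  have hab : a < b := by
    by_contra hab
    have := Fm_anti E hfin (not_lt.1 hab)
    rw [hFb] at this
    linarith
  set S : Set ℝ := {x | a ≤ x ∧ Fm E x ≤ c} with hS
  have hSne : S.Nonempty := ⟨b, hab.le, by rw [hFb]; exact hc⟩
  have hSbdd : BddBelow S := ⟨a, fun x hx => hx.1⟩
  have hSclosed : IsClosed S := by
    have hSeq : S = Set.Ici a ∩ (Fm E) ⁻¹' (Set.Iic c) := rfl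
    rw [hSeq]
    exact isClosed_Ici.inter (IsClosed.preimage (Fm_cont E hfin) isClosed_Iic)
  set s := sInf S with hs
  have hsS : s ∈ S := hSclosed.csInf_mem hSne hSbdd
  have has : a < s := by
    rcases lt_or_eq_of_le hsS.1 with h | h
    · exact h
    · exfalso
      have h2 : Fm E a ≤ c := by rw [h]; exact hsS.2
      linarith
  have hsub : E ∩ Set.Ioi a ⊆ (E ∩ Set.Ioo a s) ∪ ((E ∩ Set.Ioi s) ∪ {s}) := by
    intro z hz
    rcases lt_trichotomy z s with hb | hb | hb
    · exact Or.inl ⟨hz.1, hz.2, hb⟩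
    · exact Or.inr (Or.inr (by simp [hb]))
    · exact Or.inr (Or.inl ⟨hz.1, hb⟩)
  have hv1 : volume (E ∩ Set.Ioo a s) ≠ ⊤ :=
    fun hc => hfin (top_unique (hc ▸ measure_mono Set.inter_subset_left))
  have hv2 : volume (E ∩ Set.Ioi s) ≠ ⊤ :=
    fun hc => hfin (top_unique (hc ▸ measure_mono Set.inter_subset_left))
  have hle : volume (E ∩ Set.Ioi a)
      ≤ volume (E ∩ Set.Ioo a s) + (volume (E ∩ Set.Ioi s) + volume ({s} : Set ℝ)) := by
    refine le_trans (measure_mono hsub) (le_trans (measure_union_le _ _) ?_)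
    exact add_le_add le_rfl (measure_union_le _ _)
  rw [measure_singleton, add_zero] at hle
  have hkey : Fm E a ≤ (volume (E ∩ Set.Ioo a s)).toReal + Fm E s :=
    ENNReal.toReal_le_add hle hv1 hv2
  have hpos : 0 < (volume (E ∩ Set.Ioo a s)).toReal := by
    have h9 : Fm E s ≤ c := hsS.2
    linarith
  have hne : (E ∩ Set.Ioo a s).Nonempty := by
    rcases Set.eq_empty_or_nonempty (E ∩ Set.Ioo a s) with hemp | hne
    · rw [hemp] at hpos; simp at hpos
    · exact hne
  obtain ⟨τ, hτE, hτmem⟩ := hne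
  refine ⟨τ, ⟨hτE, hτmem.1⟩, ?_⟩
  by_contra hcon
  have : τ ∈ S := ⟨(hτmem.1).le, not_lt.1 hcon⟩
  have := csInf_le hSbdd this
  rw [← hs] at this
  linarith [hτmem.2]

lemma Fm_select (g : ℝ) (hg : 0 < g) :
    ∀ (k : ℕ) (a : ℝ), (k : ℝ) * g < Fm E a →
    ∃ t : ℕ → ℝ, (∀ i ≤ k, t i ∈ E ∩ Set.Ioi a) ∧ (∀ i < k, t i + g < t (i+1)) := by
  intro k
  induction k with
  | zero =>
      intro a ha
      simp only [Nat.cast_zero, zero_mul] at ha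
      obtain ⟨τ, hτ, _⟩ := Fm_step E hfin b hEb a 0 le_rfl ha
      exact ⟨fun _ => τ, fun i _ => hτ, fun i hi => absurd hi (Nat.not_lt_zero i)⟩
  | succ k IH =>
      intro a ha
      have hc : (0:ℝ) ≤ (k+1) * g := by positivity
      obtain ⟨τ, hτ, hFτ⟩ := Fm_step E hfin b hEb a ((k+1)*g) hc (by push_cast at ha ⊢; linarith)
      have hstep : Fm E τ ≤ Fm E (τ + g) + g := by
        have := Fm_le E hfin τ (τ + g) (by linarith)
        simpa using this
      have hIH : (k : ℝ) * g < Fm E (τ + g) := by push_cast at hFτ ⊢; linarith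
      obtain ⟨t', ht'mem, ht'gap⟩ := IH (τ + g) hIH
      refine ⟨fun i => if i = 0 then τ else t' (i - 1), ?_, ?_⟩
      · intro i hi
        rcases Nat.eq_zero_or_pos i with h0 | h0
        · simpa [h0] using hτ
        · have hik : i - 1 ≤ k := by omega
          have hmem := ht'mem (i-1) hik
          have hni : i ≠ 0 := by omega
          simp only [hni, if_false, Set.mem_inter_iff, Set.mem_Ioi]
          have h1 : τ + g < t' (i-1) := hmem.2
          have h2 : a < τ := hτ.2
          exact ⟨hmem.1, by linarith⟩
      · intro i hi
        rcases Nat.eq_zero_or_pos i with h0 | h0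
        · subst h0
          simp only [if_pos rfl, Nat.succ_ne_zero, if_false]
          have := (ht'mem 0 (Nat.zero_le k)).2
          simpa using this
        · have hni : i ≠ 0 := by omega
          simp only [hni, Nat.succ_ne_zero, if_false]
          have heq : i + 1 - 1 = (i - 1) + 1 := by omega
          rw [heq]
          exact ht'gap (i-1) (by omega)
end sel

lemma sum_inv_fac (r : ℕ) :
    ∑ j ∈ Finset.range (r+1), (((j.factorial : ℝ)) * (((r-j).factorial : ℝ)))⁻¹
      = 2^r / (r.factorial : ℝ) := by
  have hstep : ∀ j ∈ Finset.range (r+1),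
      (((j.factorial : ℝ)) * (((r-j).factorial : ℝ)))⁻¹ = (r.choose j : ℝ) / (r.factorial : ℝ) := by
    intro j hj
    have hjr : j ≤ r := Nat.lt_succ_iff.1 (Finset.mem_range.1 hj)
    have hnat := Nat.choose_mul_factorial_mul_factorial hjr
    have hc : (r.choose j : ℝ) * (j.factorial : ℝ) * ((r-j).factorial : ℝ) = (r.factorial : ℝ) := by
      exact_mod_cast congrArg (Nat.cast : ℕ → ℝ) hnat
    have h1 : (0:ℝ) < (j.factorial : ℝ) := by exact_mod_cast j.factorial_pos
    have h2 : (0:ℝ) < ((r-j).factorial : ℝ) := by exact_mod_cast (r-j).factorial_pos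
    have h3 : (0:ℝ) < (r.factorial : ℝ) := by exact_mod_cast r.factorial_pos
    field_simp
    linarith [hc]
  rw [Finset.sum_congr rfl hstep, ← Finset.sum_div]
  congr 1
  rw [← Nat.cast_sum]
  rw [Nat.sum_range_choose]
  push_cast
  ring

lemma nat_aux' : ∀ r : ℕ, 1 ≤ r → r ^ r ≤ 2 ^ ((r-1)*(r-1)) * r.factorial := nat_aux

lemma final_arith (r : ℕ) (hr : 1 ≤ r) (κ hbar g : ℝ) (hκ : 0 < κ) (hh : 0 < hbar) (hg : 0 < g)
    (key : κ * g^r ≤ 2^r * hbar) :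
    (r:ℝ) * g ≤ 2 ^ (r - 1) * (2 * (r.factorial : ℝ) / κ) ^ ((1:ℝ)/r) * hbar ^ ((1:ℝ)/r) := by
  have hrne : r ≠ 0 := by omega
  set q : ℝ := (1:ℝ)/r with hq
  have hq' : q = ((r:ℝ))⁻¹ := one_div _
  have hq0 : 0 ≤ q := by positivity
  have hid : ∀ x : ℝ, 0 ≤ x → (x ^ r) ^ q = x := by
    intro x hx
    rw [hq']
    exact Real.pow_rpow_inv_natCast hx hrne
  -- first: g ≤ (2^r * hbar / κ) ^ q
  have h1 : g ^ r ≤ 2^r * hbar / κ := by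
    rw [le_div_iff₀ hκ]; linarith
  have h2 : g ≤ (2^r * hbar / κ) ^ q := by
    calc g = (g ^ r) ^ q := (hid g hg.le).symm
      _ ≤ (2^r * hbar / κ) ^ q := Real.rpow_le_rpow (by positivity) h1 hq0
  have h3 : (r:ℝ) * g ≤ (r:ℝ) * (2^r * hbar / κ) ^ q :=
    mul_le_mul_of_nonneg_left h2 (by positivity)
  refine h3.trans ?_
  -- rewrite (2^r * hbar / κ) ^ q = (2^r/κ)^q * hbar^q
  have h4 : (2^r * hbar / κ : ℝ) ^ q = (2^r/κ : ℝ)^q * hbar^q := by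
    rw [show (2^r * hbar / κ : ℝ) = (2^r/κ) * hbar by ring]
    exact Real.mul_rpow (by positivity) hh.le
  rw [h4, ← mul_assoc]
  apply mul_le_mul_of_nonneg_right _ (Real.rpow_nonneg hh.le q)
  -- core: r * (2^r/κ)^q ≤ 2^(r-1) * (2*r!/κ)^q
  have hr' : (r:ℝ) = ((r:ℝ)^r)^q := (hid _ (by positivity)).symm
  have h2r : (2:ℝ)^(r-1) = ((2:ℝ)^((r-1)*r))^q := by
    rw [pow_mul]
    exact (hid _ (by positivity)).symm
  rw [hr', h2r, ← Real.mul_rpow (by positivity) (by positivity),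
    ← Real.mul_rpow (by positivity) (by positivity)]
  apply Real.rpow_le_rpow (by positivity) _ hq0
  -- base inequality: r^r * (2^r/κ) ≤ 2^((r-1)*r) * (2*r!/κ)
  have hnat := nat_aux' r hr
  have hcast : ((r:ℝ))^r ≤ 2^((r-1)*(r-1)) * (r.factorial : ℝ) := by
    exact_mod_cast hnat
  have hexp : (r-1)*(r-1) + r = (r-1)*r + 1 := by
    obtain ⟨m, rfl⟩ := Nat.exists_eq_add_of_le hr
    simp only [Nat.add_sub_cancel_left]
    ring
  have hmul : ((r:ℝ))^r * (2^r/κ) ≤ 2^((r-1)*(r-1)) * (r.factorial : ℝ) * (2^r/κ) :=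
    mul_le_mul_of_nonneg_right hcast (by positivity)
  refine hmul.trans (le_of_eq ?_)
  rw [show (2:ℝ)^((r-1)*(r-1)) * (r.factorial : ℝ) * (2^r/κ)
      = (2:ℝ)^((r-1)*(r-1) + r) * ((r.factorial : ℝ)/κ) by rw [pow_add]; ring]
  rw [hexp, pow_add]
  ring


end SublevelHelpers

theorem sublevel_set_estimate
    (r : ℕ) (hr : 1 ≤ r) (I : Set ℝ) (hI : I.OrdConnected)
    (h : ℝ → ℝ) (κ : ℝ) (hκ : 0 < κ)
    (hsm : ContDiffOn ℝ r h I)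
    (hder : ∀ t ∈ I, κ ≤ |iteratedDerivWithin r h I t|)
    (hbar : ℝ) (hhb : 0 < hbar) :
    volume {t | t ∈ I ∧ |h t| < hbar}
      ≤ ENNReal.ofReal
          (2 ^ (r - 1) * (2 * (r.factorial : ℝ) / κ) ^ ((1 : ℝ) / r)
            * hbar ^ ((1 : ℝ) / r)) := by
  classical
  set q : ℝ := (1 : ℝ) / r with hq
  have hrR : (0:ℝ) < r := by exact_mod_cast hr
  have hq0 : 0 ≤ q := by positivity
  set B : ℝ := 2 ^ (r - 1) * (2 * (r.factorial : ℝ) / κ) ^ q * hbar ^ q with hB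
  have hB0 : 0 ≤ B := by
    have h1 : (0:ℝ) < 2 * (r.factorial : ℝ) / κ := by positivity
    positivity
  set E : Set ℝ := {t | t ∈ I ∧ |h t| < hbar} with hE
  by_contra hcon
  push_neg at hcon
  obtain ⟨m', hm'0, hBm', hm'E⟩ := (ENNReal.lt_iff_exists_real_btwn).1 hcon
  have hm'B : B < m' := by
    rwa [ENNReal.ofReal_lt_ofReal_iff_of_nonneg hB0] at hBm'
  have hm'pos : 0 < m' := lt_of_le_of_lt hB0 hm'B
  -- choose a bounded piece of E with measure > m'
  have hEU : E = ⋃ n : ℕ, E ∩ Set.Ioo (-(n:ℝ)) n := by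
    ext x
    simp only [Set.mem_iUnion, Set.mem_inter_iff, Set.mem_Ioo]
    constructor
    · intro hx
      obtain ⟨n, hn⟩ := exists_nat_gt |x|
      exact ⟨n, hx, (abs_lt.1 hn).1, (abs_lt.1 hn).2⟩
    · rintro ⟨n, hx, _⟩; exact hx
  have hdir : Directed (· ⊆ ·) (fun n : ℕ => E ∩ Set.Ioo (-(n:ℝ)) n) := by
    intro a b
    refine ⟨max a b, Set.inter_subset_inter_right _ (Set.Ioo_subset_Ioo ?_ ?_),
      Set.inter_subset_inter_right _ (Set.Ioo_subset_Ioo ?_ ?_)⟩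
    · simp only [neg_le_neg_iff]; exact_mod_cast le_max_left a b
    · exact_mod_cast le_max_left a b
    · simp only [neg_le_neg_iff]; exact_mod_cast le_max_right a b
    · exact_mod_cast le_max_right a b
  have hsup : volume E = ⨆ n : ℕ, volume (E ∩ Set.Ioo (-(n:ℝ)) n) := by
    conv_lhs => rw [hEU]
    exact Directed.measure_iUnion hdir
  rw [hsup] at hm'E
  obtain ⟨n, hn⟩ := lt_iSup_iff.1 hm'E
  set E' : Set ℝ := E ∩ Set.Ioo (-(n:ℝ)) n with hE'
  have hfin : volume E' ≠ ⊤ := by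
    intro hc
    have hle : volume E' ≤ volume (Set.Ioo (-(n:ℝ)) n) := measure_mono Set.inter_subset_right
    rw [hc, Real.volume_Ioo] at hle
    exact (ENNReal.ofReal_ne_top (top_le_iff.1 hle)).elim
  have hEb : E' ⊆ Set.Iio (n:ℝ) := fun x hx => hx.2.2
  have hFm : m' < Fm E' (-(n:ℝ)) := by
    have heq : E' ∩ Set.Ioi (-(n:ℝ)) = E' :=
      Set.inter_eq_left.2 (fun x hx => hx.2.1)
    rw [Fm, heq]
    rwa [ENNReal.ofReal_lt_iff_lt_toReal hm'0 hfin] at hn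
  -- select points with gaps
  set g : ℝ := m' / r with hg
  have hgpos : 0 < g := by positivity
  have hrg : (r:ℝ) * g = m' := by rw [hg]; field_simp
  obtain ⟨t, htmem, htgap⟩ := Fm_select E' hfin (n:ℝ) hEb g hgpos r (-(n:ℝ))
    (by rw [hrg]; exact hFm)
  have htE : ∀ i ≤ r, t i ∈ E := fun i hi => ((htmem i hi).1 : t i ∈ E').1
  have htI : ∀ i ≤ r, t i ∈ I := fun i hi => (htE i hi).1
  have hth : ∀ i ≤ r, |h (t i)| < hbar := fun i hi => (htE i hi).2
  -- cumulative gaps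
  have hgap : ∀ d i, i + d ≤ r → (d : ℝ) * g ≤ t (i + d) - t i := by
    intro d
    induction d with
    | zero => intro i _; simp
    | succ d IH =>
        intro i hi
        have h1 := IH i (by omega)
        have h2 := htgap (i + d) (by omega)
        have h3 : i + (d+1) = (i + d) + 1 := by omega
        rw [h3]
        push_cast
        nlinarith
  have hgap' : ∀ i j, i ≤ j → j ≤ r → ((j : ℝ) - i) * g ≤ t j - t i := by
    intro i j hij hjr
    have h1 := hgap (j - i) i (by omega)
    have hji : i + (j - i) = j := by omega
    rw [hji] at h1
    have hcast : ((j - i : ℕ) : ℝ) = (j : ℝ) - i := by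
      push_cast [Nat.cast_sub hij]; ring
    rwa [hcast] at h1
  have hlt : ∀ i j, i < j → j ≤ r → t i < t j := by
    intro i j hij hjr
    have h1 := hgap' i j hij.le hjr
    have h2 : (0:ℝ) < ((j:ℝ) - i) * g := by
      apply mul_pos _ hgpos
      have : (i:ℝ) < j := by exact_mod_cast hij
      linarith
    linarith
  have hinj : ∀ i j, i ≤ r → j ≤ r → i ≠ j → t i ≠ t j := by
    intro i j hir hjr hij
    rcases Nat.lt_or_ge i j with hlt' | hge
    · exact ne_of_lt (hlt i j hlt' hjr)
    · exact (ne_of_lt (hlt j i (by omega) hir)).symm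
  -- unique differentiability
  have hUD : UniqueDiffOn ℝ I := by
    apply uniqueDiffOn_convex (convex_iff_ordConnected.2 hI)
    have hsub : Set.Ioo (t 0) (t r) ⊆ I := fun x hx =>
      hI.out (htI 0 (by omega)) (htI r le_rfl) ⟨hx.1.le, hx.2.le⟩
    have hsub2 : Set.Ioo (t 0) (t r) ⊆ interior I := interior_maximal hsub isOpen_Ioo
    have hne : (Set.Ioo (t 0) (t r)).Nonempty := Set.nonempty_Ioo.2 (hlt 0 r hr le_rfl)
    exact hne.mono hsub2
  -- interpolation polynomial
  obtain ⟨P, hPdeg, hPeval, hPcoeff⟩ := interp_exists r t (fun j => h (t j)) hinj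
  set pe : ℝ → ℝ := fun x => P.eval x with hpe
  have hpeCD : ContDiffOn ℝ r pe I := (poly_contDiff P r).contDiffOn
  set f : ℝ → ℝ := h - pe with hf
  have hfCD : ContDiffOn ℝ r f I := hsm.sub hpeCD
  set T : Fin (r+1) → ℝ := fun j => t j.val with hT
  have hTmono : StrictMono T := fun a b hab =>
    hlt a.val b.val hab (Nat.lt_succ_iff.1 b.isLt)
  have hTI : ∀ j, T j ∈ I := fun j => htI j.val (Nat.lt_succ_iff.1 j.isLt)
  have hTz : ∀ j, f (T j) = 0 := by
    intro j
    have := hPeval j.val (Nat.lt_succ_iff.1 j.isLt)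
    simp only [hf, hT, hpe, Pi.sub_apply]
    rw [this]
    ring
  obtain ⟨ξ, hξmem, hξ0⟩ := rolle_iter I hI hUD r f T hTmono hTI hfCD hTz
  have hξI : ξ ∈ I := by
    apply hI.out (htI 0 (by omega)) (htI r le_rfl)
    have h0 : T 0 = t 0 := rfl
    have h1 : T (Fin.last r) = t r := rfl
    rwa [h0, h1] at hξmem
  -- compute the iterated derivative of h at ξ
  have hpeξ : iteratedDerivWithin r pe I ξ = (r.factorial : ℝ) * P.coeff r := by
    rw [poly_iteratedDerivWithin r P I hUD ξ hξI, iterate_deriv_eq_C r P hPdeg]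
    simp
  have hsubd : iteratedDerivWithin r h I ξ = (r.factorial : ℝ) * P.coeff r := by
    have h1 := iteratedDerivWithin_sub hξI hUD (hsm ξ hξI) (hpeCD ξ hξI)
    have h2 : iteratedDerivWithin r f I ξ = 0 := hξ0
    rw [hf] at h2
    rw [h1, hpeξ] at h2
    linarith
  have hκc : κ ≤ (r.factorial : ℝ) * |P.coeff r| := by
    have h1 := hder ξ hξI
    rw [hsubd, abs_mul, abs_of_nonneg (by positivity : (0:ℝ) ≤ (r.factorial : ℝ))] at h1
    exact h1
  -- upper bound on the coefficient
  have hjfac : ∀ j ∈ Finset.range (r+1),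
      |h (t j) * (∏ i ∈ (Finset.range (r+1)).erase j, (t j - t i))⁻¹|
        ≤ hbar * (g^r * ((j.factorial:ℝ) * (((r-j).factorial:ℝ))))⁻¹ := by
    intro j hj
    have hjr : j ≤ r := Nat.lt_succ_iff.1 (Finset.mem_range.1 hj)
    have hlb := prod_gap r g hgpos t hgap' j hjr
    have hpos0 : (0:ℝ) < g^r * ((j.factorial:ℝ) * (((r-j).factorial:ℝ))) := by
      have p1 : (0:ℝ) < (j.factorial:ℝ) := by exact_mod_cast j.factorial_pos
      have p2 : (0:ℝ) < ((r-j).factorial:ℝ) := by exact_mod_cast (r-j).factorial_pos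
      positivity
    rw [abs_mul, abs_inv, Finset.abs_prod]
    apply mul_le_mul (le_of_lt (hth j hjr))
    · exact inv_anti₀ hpos0 hlb
    · positivity
    · exact hhb.le
  have hcub : |P.coeff r| ≤ hbar * 2^r / ((r.factorial : ℝ) * g^r) := by
    rw [hPcoeff]
    calc |∑ j ∈ Finset.range (r+1),
        h (t j) * (∏ i ∈ (Finset.range (r+1)).erase j, (t j - t i))⁻¹|
        ≤ ∑ j ∈ Finset.range (r+1),
          |h (t j) * (∏ i ∈ (Finset.range (r+1)).erase j, (t j - t i))⁻¹| :=
        Finset.abs_sum_le_sum_abs _ _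
      _ ≤ ∑ j ∈ Finset.range (r+1),
          hbar * (g^r * ((j.factorial:ℝ) * (((r-j).factorial:ℝ))))⁻¹ :=
        Finset.sum_le_sum hjfac
      _ = hbar / g^r * ∑ j ∈ Finset.range (r+1),
          ((j.factorial:ℝ) * (((r-j).factorial:ℝ)))⁻¹ := by
        rw [Finset.mul_sum]
        apply Finset.sum_congr rfl
        intro j hj
        rw [mul_inv]
        have hgr : g^r ≠ 0 := by positivity
        field_simp
      _ = hbar / g^r * (2^r / (r.factorial : ℝ)) := by rw [sum_inv_fac]
      _ = hbar * 2^r / ((r.factorial : ℝ) * g^r) := by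
        have h3 : (0:ℝ) < (r.factorial : ℝ) := by exact_mod_cast r.factorial_pos
        have hgr : (0:ℝ) < g^r := by positivity
        field_simp
  -- key inequality
  have hkey : κ * g^r ≤ 2^r * hbar := by
    have h3 : (0:ℝ) < (r.factorial : ℝ) := by exact_mod_cast r.factorial_pos
    have hgr : (0:ℝ) < g^r := by positivity
    have h1 : κ ≤ (r.factorial : ℝ) * (hbar * 2^r / ((r.factorial : ℝ) * g^r)) :=
      hκc.trans (mul_le_mul_of_nonneg_left hcub h3.le)
    have h2 : (r.factorial : ℝ) * (hbar * 2^r / ((r.factorial : ℝ) * g^r))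
        = 2^r * hbar / g^r := by field_simp
    rw [h2] at h1
    calc κ * g^r ≤ (2^r*hbar / g^r) * g^r := mul_le_mul_of_nonneg_right h1 hgr.le
      _ = 2^r * hbar := by field_simp
  -- conclude
  have hfinal := final_arith r hr κ hbar g hκ hhb hgpos hkey
  rw [hrg] at hfinal
  rw [hB] at hm'B
  rw [← hq] at hfinal
  linarith
end

section
/- Let h : ℝ → ℝ be r times continuously differentiable on an interval I with |h^(r)(t)| ≥ κ > 0 on I, and let σ = (σ₁,…,σ_{r-1}) be a tuple of signs σⱼ ∈ {−1,+1}. Then the set I_σ = {t ∈ I : σⱼ·h^(j)(t) ≥ 0 for all j = 1,…,r−1} is an interval (i.e., a convex subset of ℝ). -/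
set_option maxHeartbeats 1000000 in
theorem sign_set_is_interval
    (r : ℕ) (hr : 2 ≤ r) (I : Set ℝ) (hI : I.OrdConnected)
    (h : ℝ → ℝ) (κ : ℝ) (hκ : 0 < κ)
    (hsm : ContDiffOn ℝ r h I)
    (hder : ∀ t ∈ I, κ ≤ |iteratedDerivWithin r h I t|)
    (σ : ℕ → ℝ) (hσ : ∀ j, σ j = 1 ∨ σ j = -1) :
    Convex ℝ {t | t ∈ I ∧ ∀ j, 1 ≤ j → j ≤ r - 1 →
      0 ≤ σ j * iteratedDerivWithin j h I t} := by
  classical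
  by_cases hnt : I.Nontrivial
  swap
  · rw [Set.not_nontrivial_iff] at hnt
    exact (hnt.anti (fun t ht => ht.1)).convex
  have hconv : Convex ℝ I := convex_iff_ordConnected.mpr hI
  -- interior of I is nonempty
  obtain ⟨a, ha, b, hb, hab⟩ := hnt
  have hIcc : Set.Icc (min a b) (max a b) ⊆ I := by
    rcases le_total a b with hle | hle
    · simpa [hle, max_eq_right hle] using hI.out ha hb
    · simpa [min_eq_right hle, max_eq_left hle] using hI.out hb ha
  have hintne : (interior I).Nonempty := by
    have h1 : Set.Ioo (min a b) (max a b) ⊆ interior I :=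
      isOpen_Ioo.subset_interior_iff.mpr ((Set.Ioo_subset_Icc_self).trans hIcc)
    have h2 : min a b < max a b := by
      rcases lt_or_gt_of_ne hab with hlt | hlt
      · simpa [min_eq_left hlt.le, max_eq_right hlt.le] using hlt
      · simpa [min_eq_right hlt.le, max_eq_left hlt.le] using hlt
    exact ⟨(min a b + max a b) / 2, h1 ⟨by linarith, by linarith⟩⟩
  have hUD : UniqueDiffOn ℝ I := uniqueDiffOn_convex hconv hintne
  set f : ℕ → ℝ → ℝ := fun j => iteratedDerivWithin j h I with hf
  -- f r has constant sign on I
  have hcontr : ContinuousOn (f r) I :=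
    hsm.continuousOn_iteratedDerivWithin le_rfl hUD
  obtain ⟨ε, hε1, hεsign⟩ : ∃ ε : ℝ, (ε = 1 ∨ ε = -1) ∧ ∀ t ∈ I, 0 ≤ ε * f r t := by
    have hne0 : ∀ t ∈ I, f r t ≠ 0 := by
      intro t ht h0
      have := hder t ht
      rw [hf] at h0
      simp [h0] at this
      linarith
    rcases le_or_gt 0 (f r a) with hpos | hneg
    · refine ⟨1, Or.inl rfl, fun t ht => ?_⟩
      rw [one_mul]
      by_contra hlt
      push_neg at hlt
      have hsub : Set.uIcc t a ⊆ I := hI.uIcc_subset ht ha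
      have := intermediate_value_uIcc (hcontr.mono hsub)
      have h0 : (0:ℝ) ∈ Set.uIcc (f r t) (f r a) :=
        Set.mem_uIcc.mpr (Or.inl ⟨hlt.le, hpos⟩)
      obtain ⟨c, hc, hfc⟩ := this h0
      exact hne0 c (hsub hc) hfc
    · refine ⟨-1, Or.inr rfl, fun t ht => ?_⟩
      by_contra hlt
      push_neg at hlt
      have ht' : 0 < f r t := by nlinarith
      have hsub : Set.uIcc a t ⊆ I := hI.uIcc_subset ha ht
      have := intermediate_value_uIcc (hcontr.mono hsub)
      have h0 : (0:ℝ) ∈ Set.uIcc (f r a) (f r t) :=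
        Set.mem_uIcc.mpr (Or.inl ⟨hneg.le, ht'.le⟩)
      obtain ⟨c, hc, hfc⟩ := this h0
      exact hne0 c (hsub hc) hfc
  set τ : ℕ → ℝ := fun j => if j = r then ε else σ j with hτdef
  have hτ : ∀ j, τ j = 1 ∨ τ j = -1 := by
    intro j; by_cases hj : j = r <;> simp [hτdef, hj, hε1, hσ j]
  set S : ℕ → Set ℝ := fun k => {t | t ∈ I ∧ ∀ j, k ≤ j → j ≤ r - 1 →
      0 ≤ σ j * f j t} with hS
  have hSsubI : ∀ k, S k ⊆ I := fun k t ht => ht.1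
  have hSmono : ∀ k, S k ⊆ S (k + 1) := by
    intro k t ht
    exact ⟨ht.1, fun j hj1 hj2 => ht.2 j (by omega) hj2⟩
  -- sign of f (k+1) on S (k+1), for k+1 ≤ r
  have hsignS : ∀ k, k + 1 ≤ r → ∀ t ∈ S (k + 1), 0 ≤ τ (k + 1) * f (k + 1) t := by
    intro k hk t ht
    by_cases hkr : k + 1 = r
    · have hτe : τ (k + 1) = ε := by simp [hτdef, hkr]
      rw [hτe, hkr]; exact hεsign t ht.1
    · have hle : k + 1 ≤ r - 1 := by omega
      rw [hτdef]; simp only [if_neg hkr]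
      exact ht.2 (k + 1) le_rfl hle
  -- main downward induction
  have key : ∀ m, m ≤ r - 1 → Convex ℝ (S (r - m)) := by
    intro m
    induction m with
    | zero =>
      intro _
      have : S (r - 0) = I := by
        ext t
        simp only [hS, Set.mem_setOf_eq, Nat.sub_zero]
        refine ⟨fun ht => ht.1, fun ht => ⟨ht, fun j hj1 hj2 => by omega⟩⟩
      rw [this]; exact hconv
    | succ m IH =>
      intro hm
      have hIHc : Convex ℝ (S (r - m)) := IH (by omega)
      set k := r - (m + 1) with hk
      have hk1r : k + 1 = r - m := by omega
      have hk1 : 1 ≤ k := by omega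
      have hkr1 : k ≤ r - 1 := by omega
      have hkr : k + 1 ≤ r := by omega
      rw [← hk1r] at hIHc
      -- monotonicity of g = τ(k+1) * f k on S (k+1)
      set c1 := τ (k + 1) with hc1
      have hc1sq : c1 * c1 = 1 := by rcases hτ (k + 1) with h' | h' <;> rw [← hc1] at h' <;>
        rw [h'] <;> norm_num
      set g : ℝ → ℝ := fun t => c1 * f k t with hg
      have hintsub : interior (S (k + 1)) ⊆ interior I := interior_mono (hSsubI _)
      have hdiffat : ∀ x ∈ interior (S (k + 1)), DifferentiableAt ℝ (f k) x := by
        intro x hx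
        have hxI : x ∈ I := interior_subset (hintsub hx)
        have hnhds : I ∈ nhds x := mem_interior_iff_mem_nhds.mp (hintsub hx)
        have hd : DifferentiableWithinAt ℝ (f k) I x :=
          (hsm.differentiableOn_iteratedDerivWithin (by exact_mod_cast (by omega : k < r)) hUD)
            x hxI
        exact hd.differentiableAt hnhds
      have hderiveq : ∀ x ∈ interior (S (k + 1)), deriv (f k) x = f (k + 1) x := by
        intro x hx
        have hxI : x ∈ I := interior_subset (hintsub hx)
        have hnhds : I ∈ nhds x := mem_interior_iff_mem_nhds.mp (hintsub hx)
        rw [← derivWithin_of_mem_nhds hnhds]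
        exact (congrFun iteratedDerivWithin_succ x).symm
      have hgmono : MonotoneOn g (S (k + 1)) := by
        apply monotoneOn_of_deriv_nonneg hIHc
        · exact continuousOn_const.mul
            ((hsm.continuousOn_iteratedDerivWithin (by exact_mod_cast (by omega : k ≤ r)) hUD).mono
              (hSsubI _))
        · intro x hx
          exact ((hdiffat x hx).const_mul c1).differentiableWithinAt
        · intro x hx
          have hdg : deriv g x = c1 * deriv (f k) x := by
            rw [hg]; exact deriv_const_mul c1 (hdiffat x hx)
          rw [hdg, hderiveq x hx]
          exact hsignS k hkr x (interior_subset hx)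
      -- now prove convexity of S k
      intro x hx y hy a' b' ha' hb' hab'
      have hxk1 : x ∈ S (k + 1) := hSmono k hx
      have hyk1 : y ∈ S (k + 1) := hSmono k hy
      have hzk1 : a' • x + b' • y ∈ S (k + 1) := hIHc hxk1 hyk1 ha' hb' hab'
      set z := a' • x + b' • y with hz
      refine ⟨hzk1.1, fun j hj1 hj2 => ?_⟩
      rcases eq_or_lt_of_le hj1 with hjk | hjk
      swap
      · exact hzk1.2 j hjk hj2
      rw [← hjk]
      -- the j = k case
      have hfz : σ k * f k z = (σ k * c1) * g z := by
        show σ k * f k z = (σ k * c1) * (c1 * f k z)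
        linear_combination (-(σ k * f k z)) * hc1sq
      rw [hfz]
      have hsx : 0 ≤ σ k * f k x := hx.2 k le_rfl hkr1
      have hsy : 0 ≤ σ k * f k y := hy.2 k le_rfl hkr1
      have hgx : σ k * f k x = (σ k * c1) * g x := by
        show σ k * f k x = (σ k * c1) * (c1 * f k x)
        linear_combination (-(σ k * f k x)) * hc1sq
      have hgy : σ k * f k y = (σ k * c1) * g y := by
        show σ k * f k y = (σ k * c1) * (c1 * f k y)
        linear_combination (-(σ k * f k y)) * hc1sq
      have hcc : σ k * c1 = 1 ∨ σ k * c1 = -1 := by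
        rcases hσ k with h1 | h1 <;> rcases hτ (k + 1) with h2 | h2 <;>
          rw [← hc1] at h2 <;> rw [h1, h2] <;> norm_num
      rcases le_total x y with hxy | hxy
      · have hxz : x ≤ z := by
          show x ≤ a' * x + b' * y
          have e1 : a' * x + b' * y - x = b' * (y - x) := by linear_combination x * hab'
          linarith [mul_nonneg hb' (sub_nonneg.mpr hxy), e1]
        have hzy : z ≤ y := by
          show a' * x + b' * y ≤ y
          have e1 : y - (a' * x + b' * y) = a' * (y - x) := by linear_combination (-y) * hab'
          linarith [mul_nonneg ha' (sub_nonneg.mpr hxy), e1]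
        rcases hcc with hc | hc
        · rw [hc, one_mul]
          have := hgmono hxk1 hzk1 hxz
          rw [hc, one_mul] at hgx
          linarith [hgx ▸ hsx]
        · rw [hc]
          have := hgmono hzk1 hyk1 hzy
          rw [hc] at hgy
          nlinarith
      · have hyz : y ≤ z := by
          show y ≤ a' * x + b' * y
          have e1 : a' * x + b' * y - y = a' * (x - y) := by linear_combination y * hab'
          linarith [mul_nonneg ha' (sub_nonneg.mpr hxy), e1]
        have hzx : z ≤ x := by
          show a' * x + b' * y ≤ x
          have e1 : x - (a' * x + b' * y) = b' * (x - y) := by linear_combination (-x) * hab'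
          linarith [mul_nonneg hb' (sub_nonneg.mpr hxy), e1]
        rcases hcc with hc | hc
        · rw [hc, one_mul]
          have := hgmono hyk1 hzk1 hyz
          rw [hc, one_mul] at hgy
          linarith [hgy ▸ hsy]
        · rw [hc]
          have := hgmono hzk1 hxk1 hzx
          rw [hc] at hgx
          nlinarith
  have h1 : r - (r - 1) = 1 := by omega
  have := key (r - 1) le_rfl
  rw [h1] at this
  exact this
end

section
/- Let h : [0,δ] → ℝ be r times continuously differentiable with h^(r)(t) ≥ κ > 0 on [0,δ], and suppose h^(j)(0) ≥ −ε and h^(j)(δ) ≥ −ε for all j = 1,…,r−1, where ε ≥ 0. If moreover h(0) ≥ ħ/2 and h(δ) ≥ ħ/2 and δ ≤ 1, then there is a constant C depending only on r and κ such that h(t) ≥ ħ/2 − C·ε for all t ∈ [0,δ]. In particular if ε ≤ ħ/(4C) then h ≥ ħ/4 on [0,δ]. -/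
open Set

private lemma mono_aux {δ M : ℝ} (hδ : 0 < δ) (f f' : ℝ → ℝ)
    (hdiff : ∀ t ∈ Set.Icc 0 δ, HasDerivWithinAt f (f' t) (Set.Icc 0 δ) t)
    (hM' : ∀ t ∈ Set.Icc 0 δ, -M ≤ f' t) :
    ∀ t ∈ Set.Icc 0 δ, f 0 - M * t ≤ f t := by
  have hmono : MonotoneOn (fun t => f t + M * t) (Set.Icc 0 δ) := by
    apply monotoneOn_of_deriv_nonneg (convex_Icc 0 δ)
    · exact ContinuousOn.add (fun t ht => (hdiff t ht).continuousWithinAt) (by fun_prop)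
    · intro x hx
      rw [interior_Icc] at hx
      have h1 : HasDerivAt (fun t => f t + M * t) (f' x + M * 1) x :=
        ((hdiff x (Set.Ioo_subset_Icc_self hx)).hasDerivAt
          (Icc_mem_nhds hx.1 hx.2)).add ((hasDerivAt_id x).const_mul M)
      exact h1.differentiableAt.differentiableWithinAt
    · intro x hx
      rw [interior_Icc] at hx
      have h1 : HasDerivAt (fun t => f t + M * t) (f' x + M * 1) x :=
        ((hdiff x (Set.Ioo_subset_Icc_self hx)).hasDerivAt
          (Icc_mem_nhds hx.1 hx.2)).add ((hasDerivAt_id x).const_mul M)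
      rw [h1.deriv]
      have := hM' x (Set.Ioo_subset_Icc_self hx)
      linarith
  intro t ht
  have h0 : (0 : ℝ) ∈ Set.Icc 0 δ := ⟨le_refl 0, hδ.le⟩
  have := hmono h0 ht ht.1
  simp only at this
  linarith

theorem almost_monotonicity
    (r : ℕ) (hr : 1 ≤ r) (κ : ℝ) (hκ : 0 < κ) :
    ∃ C > 0, ∀ (δ ε hbar : ℝ) (h : ℝ → ℝ),
      0 < δ → δ ≤ 1 → 0 ≤ ε → 0 < hbar →
      ContDiffOn ℝ r h (Set.Icc 0 δ) →
      (∀ t ∈ Set.Icc 0 δ, κ ≤ iteratedDerivWithin r h (Set.Icc 0 δ) t) →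
      (∀ j, 1 ≤ j → j ≤ r - 1 →
        -ε ≤ iteratedDerivWithin j h (Set.Icc 0 δ) 0 ∧
        -ε ≤ iteratedDerivWithin j h (Set.Icc 0 δ) δ) →
      hbar / 2 ≤ h 0 → hbar / 2 ≤ h δ →
      (∀ t ∈ Set.Icc 0 δ, hbar / 2 - C * ε ≤ h t) ∧
      (ε ≤ hbar / (4 * C) → ∀ t ∈ Set.Icc 0 δ, hbar / 4 ≤ h t) := by
  refine ⟨r, by exact_mod_cast hr, ?_⟩
  intro δ ε hbar h hδ hδ1 hε hbar0 hcd hκle hbd h0 hδval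
  set s := Set.Icc (0:ℝ) δ with hs
  have huniq : UniqueDiffOn ℝ s := uniqueDiffOn_Icc hδ
  -- derivative structure
  have hderiv : ∀ j : ℕ, j < r → ∀ t ∈ s,
      HasDerivWithinAt (iteratedDerivWithin j h s) (iteratedDerivWithin (j+1) h s t) s t := by
    intro j hj t ht
    have hdiffOn : DifferentiableOn ℝ (iteratedDerivWithin j h s) s := by
      apply hcd.differentiableOn_iteratedDerivWithin
      · exact_mod_cast hj
      · exact huniq
    have := (hdiffOn t ht).hasDerivWithinAt
    rwa [← iteratedDerivWithin_succ] at this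
  -- downward induction claim
  have claim : ∀ k : ℕ, k ≤ r - 1 → ∀ t ∈ s, -(k:ℝ) * ε ≤ iteratedDerivWithin (r-k) h s t := by
    intro k
    induction k with
    | zero =>
      intro _ t ht
      have := hκle t ht
      simp only [Nat.sub_zero, Nat.cast_zero, neg_zero, zero_mul]
      linarith
    | succ k ih =>
      intro hk t ht
      have hk' : k ≤ r - 1 := by omega
      have hj1 : r - (k+1) + 1 = r - k := by omega
      have hjlt : r - (k+1) < r := by omega
      have hd : ∀ x ∈ s, HasDerivWithinAt (iteratedDerivWithin (r-(k+1)) h s)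
          (iteratedDerivWithin (r-k) h s x) s x := by
        intro x hx
        have := hderiv (r-(k+1)) hjlt x hx
        rwa [hj1] at this
      have hlow : ∀ x ∈ s, -((k:ℝ) * ε) ≤ iteratedDerivWithin (r-k) h s x := by
        intro x hx
        have := ih hk' x hx
        linarith [this]
      have := mono_aux hδ _ _ hd hlow t ht
      have hb0 : -ε ≤ iteratedDerivWithin (r-(k+1)) h s 0 := (hbd (r-(k+1)) (by omega) (by omega)).1
      have ht1 : t ≤ 1 := le_trans ht.2 hδ1
      have ht0 : 0 ≤ t := ht.1
      have hkε : 0 ≤ (k:ℝ) * ε := mul_nonneg (Nat.cast_nonneg k) hε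
      have hktε : (k:ℝ) * ε * t ≤ (k:ℝ) * ε := by nlinarith
      push_cast
      linarith
  -- final step on h itself
  have hd1 : ∀ x ∈ s, HasDerivWithinAt h (iteratedDerivWithin 1 h s x) s x := by
    intro x hx
    have hdiffOn : DifferentiableOn ℝ h s := hcd.differentiableOn (by exact_mod_cast (Nat.one_le_iff_ne_zero.mp hr))
    have := (hdiffOn x hx).hasDerivWithinAt
    rwa [← iteratedDerivWithin_one] at this
  have hlow1 : ∀ x ∈ s, -(((r:ℝ)-1) * ε) ≤ iteratedDerivWithin 1 h s x := by
    intro x hx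
    have h1 : 1 = r - (r-1) := by omega
    have := claim (r-1) le_rfl x hx
    rw [← h1] at this
    have : -(((r:ℕ)-1 : ℕ):ℝ) * ε ≤ iteratedDerivWithin 1 h s x := this
    have hcast : (((r:ℕ)-1 : ℕ):ℝ) ≤ (r:ℝ) - 1 + 1 - 1 := by
      push_cast [Nat.cast_sub hr]; ring_nf; simp [Nat.cast_sub hr]
    have hcast' : (((r:ℕ)-1 : ℕ):ℝ) = (r:ℝ) - 1 := by
      push_cast [Nat.cast_sub hr]; ring
    rw [hcast'] at this
    linarith
  have hmain : ∀ t ∈ s, hbar / 2 - (r:ℝ) * ε ≤ h t := by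
    intro t ht
    have := mono_aux hδ h _ hd1 hlow1 t ht
    have ht1 : t ≤ 1 := le_trans ht.2 hδ1
    have ht0 : 0 ≤ t := ht.1
    have hr1 : (1:ℝ) ≤ r := by exact_mod_cast hr
    have : ((r:ℝ)-1) * ε * t ≤ (r:ℝ) * ε := by
      nlinarith [mul_nonneg (mul_nonneg (sub_nonneg.mpr hr1) hε) (sub_nonneg.mpr ht1),
        mul_nonneg hε ht0]
    linarith [mono_aux hδ h _ hd1 hlow1 t ht]
  refine ⟨hmain, ?_⟩
  intro hεsmall t ht
  have hr0 : (0:ℝ) < r := by exact_mod_cast hr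
  have : (r:ℝ) * ε ≤ hbar / 4 := by
    rw [div_mul_eq_div_div] at hεsmall
    have h2 := (le_div_iff₀ hr0).mp hεsmall
    linarith
  have := hmain t ht
  linarith
end

section
/- Let h : [0,L] → ℝ be r times continuously differentiable with h^(r) ≥ κ/2 > 0 on [0,L], with σⱼ·h^(j)(0) ≥ −η and σⱼ·h^(j)(L) ≥ −η for some signs σⱼ (j = 1,…,r−1), and suppose |h(0)| ≤ 2ħ and |h(L)| ≤ 2ħ where η = ħ^(1−1/r). Then L ≤ C·ħ^(1/r), where C depends only on r and κ. -/
open Set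

/-- Monotonicity from within-derivative nonneg. -/
lemma seg_aux_mono {a b : ℝ} {g g' : ℝ → ℝ}
    (hd : ∀ t ∈ Icc a b, HasDerivWithinAt g (g' t) (Icc a b) t)
    (h0 : ∀ t ∈ Icc a b, 0 ≤ g' t) :
    MonotoneOn g (Icc a b) := by
  apply monotoneOn_of_deriv_nonneg (convex_Icc a b)
    (fun t ht => (hd t ht).continuousWithinAt)
  · intro t ht
    rw [interior_Icc] at ht
    exact (((hd t (Ioo_subset_Icc_self ht)).hasDerivAt
      (Icc_mem_nhds ht.1 ht.2)).differentiableAt).differentiableWithinAt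
  · intro t ht
    rw [interior_Icc] at ht
    have hda := (hd t (Ioo_subset_Icc_self ht)).hasDerivAt (Icc_mem_nhds ht.1 ht.2)
    rw [hda.deriv]
    exact h0 t (Ioo_subset_Icc_self ht)

lemma seg_poly1 (c E : ℝ) (m : ℕ) (t : ℝ) :
    HasDerivAt (fun x : ℝ => c * x ^ (m + 1) / (m + 1).factorial - E * x)
      (c * t ^ m / m.factorial - E) t := by
  have h1 : HasDerivAt (fun x : ℝ => c * x ^ (m + 1) / (m + 1).factorial)
      (c * ((m + 1) * t ^ m) / (m + 1).factorial) t :=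
    by simpa using ((hasDerivAt_pow (m + 1) t).const_mul c).div_const ((m + 1).factorial : ℝ)
  have h2 : HasDerivAt (fun x : ℝ => E * x) E t := by
    simpa using (hasDerivAt_id t).const_mul E
  have : HasDerivAt (fun x : ℝ => c * x ^ (m + 1) / (m + 1).factorial - E * x)
      (c * ((m + 1) * t ^ m) / (m + 1).factorial - E) t := h1.fun_sub h2
  convert this using 1
  rw [Nat.factorial_succ]
  have hm : (m.factorial : ℝ) ≠ 0 := by positivity
  push_cast
  field_simp

lemma seg_poly2 (c E L : ℝ) (m : ℕ) (t : ℝ) :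
    HasDerivAt (fun x : ℝ => -(c * (L - x) ^ (m + 1) / (m + 1).factorial) - E * x)
      (c * (L - t) ^ m / m.factorial - E) t := by
  have hlin : HasDerivAt (fun x : ℝ => L - x) (-1) t := by
    simpa using (hasDerivAt_const t L).fun_sub (hasDerivAt_id t)
  have h1 : HasDerivAt (fun x : ℝ => -(c * (L - x) ^ (m + 1) / (m + 1).factorial))
      (-(c * ((m + 1) * (L - t) ^ m * (-1)) / (m + 1).factorial)) t := by
    simpa using (((hlin.pow (m + 1)).const_mul c).div_const ((m + 1).factorial : ℝ)).fun_neg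
  have h2 : HasDerivAt (fun x : ℝ => E * x) E t := by
    simpa using (hasDerivAt_id t).const_mul E
  have : HasDerivAt (fun x : ℝ => -(c * (L - x) ^ (m + 1) / (m + 1).factorial) - E * x)
      (-(c * ((m + 1) * (L - t) ^ m * (-1)) / (m + 1).factorial) - E) t := h1.fun_sub h2
  convert this using 1
  rw [Nat.factorial_succ]
  have hm : (m.factorial : ℝ) ≠ 0 := by positivity
  push_cast
  field_simp

set_option maxHeartbeats 1000000 in
theorem segment_length_bound
    (r : ℕ) (hr : 1 ≤ r) (κ : ℝ) (hκ : 0 < κ) :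
    ∃ C > 0, ∀ (L hbar : ℝ) (h : ℝ → ℝ) (σ : ℕ → ℝ),
      0 < L → 0 < hbar → hbar ≤ 1 →
      (∀ j, σ j = 1 ∨ σ j = -1) →
      ContDiffOn ℝ r h (Set.Icc 0 L) →
      (∀ t ∈ Set.Icc 0 L, κ / 2 ≤ iteratedDerivWithin r h (Set.Icc 0 L) t) →
      (∀ j, 1 ≤ j → j ≤ r - 1 →
        -(hbar ^ (1 - 1 / (r : ℝ))) ≤ σ j * iteratedDerivWithin j h (Set.Icc 0 L) 0 ∧
        -(hbar ^ (1 - 1 / (r : ℝ))) ≤ σ j * iteratedDerivWithin j h (Set.Icc 0 L) L) →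
      |h 0| ≤ 2 * hbar → |h L| ≤ 2 * hbar →
      L ≤ C * hbar ^ (1 / (r : ℝ)) := by
  classical
  have hA0 : (0:ℝ) < 4 * r.factorial * (r + 3) / κ := by positivity
  set A : ℝ := 4 * r.factorial * (r + 3) / κ with hAdef
  refine ⟨max 1 A + 8 / κ, by positivity, ?_⟩
  intro L hbar h σ hL hbar0 hbar1 hσ hcd hconv hbd hv0 hvL
  set C : ℝ := max 1 A + 8 / κ with hCdef
  have hC1 : 1 ≤ C := le_add_of_le_of_nonneg (le_max_left _ _) (by positivity)
  set c : ℝ := κ / 2 with hcdef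
  have hc0 : 0 < c := by positivity
  set s : Set ℝ := Set.Icc (0:ℝ) L with hsdef
  have husd : UniqueDiffOn ℝ s := uniqueDiffOn_Icc hL
  have h0s : (0:ℝ) ∈ s := ⟨le_refl 0, hL.le⟩
  have hLs : L ∈ s := ⟨hL.le, le_refl L⟩
  have hderiv : ∀ j, j < r → ∀ t ∈ s, HasDerivWithinAt (iteratedDerivWithin j h s)
      (iteratedDerivWithin (j + 1) h s t) s t := by
    intro j hj t ht
    have hdiff : DifferentiableWithinAt ℝ (iteratedDerivWithin j h s) s t :=
      (hcd.differentiableOn_iteratedDerivWithin (by exact_mod_cast hj) husd) t ht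
    have h2 : iteratedDerivWithin (j + 1) h s t = derivWithin (iteratedDerivWithin j h s) s t :=
      by rw [iteratedDerivWithin_succ]
    rw [h2]; exact hdiff.hasDerivWithinAt
  set η : ℝ := hbar ^ (1 - 1 / (r : ℝ)) with hηdef
  have hη0 : 0 < η := Real.rpow_pos_of_pos hbar0 _
  set E : ℕ → ℝ := fun k => η * ∑ i ∈ Finset.range k, L ^ i with hEdef
  have hE0 : ∀ k, 0 ≤ E k :=
    fun k => mul_nonneg hη0.le (Finset.sum_nonneg fun i _ => by positivity)
  have hEsucc : ∀ k, E (k + 1) = η + E k * L := by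
    intro k
    simp only [hEdef]
    rw [geom_sum_succ]
    ring
  -- The main downward induction.
  have inv : ∀ k, k ≤ r - 1 → ∃ ε : ℝ, (ε = 1 ∨ ε = -1) ∧ ∃ d : Bool,
      ∀ t ∈ s, c * (cond d (L - t) t) ^ k / k.factorial - E k
        ≤ ε * iteratedDerivWithin (r - k) h s t := by
    intro k
    induction k with
    | zero =>
      intro _
      refine ⟨1, Or.inl rfl, false, ?_⟩
      intro t ht
      have := hconv t ht
      simp only [cond, pow_zero, Nat.factorial_zero, Nat.cast_one, hEdef, Finset.range_zero,
        Finset.sum_empty, mul_zero, Nat.sub_zero]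
      linarith
    | succ k IH =>
      intro hk1
      obtain ⟨ε, hε, d, hbound⟩ := IH (by omega)
      have hj1 : 1 ≤ r - (k + 1) := by omega
      have hjr1 : r - (k + 1) ≤ r - 1 := by omega
      have hjlt : r - (k + 1) < r := by omega
      set j : ℕ := r - (k + 1) with hjdef
      have hjr : j + 1 = r - k := by omega
      obtain ⟨hbd0, hbdL⟩ := hbd j hj1 hjr1
      -- the comparison polynomial
      set q : ℝ → ℝ := fun x => cond d (-(c * (L - x) ^ (k + 1) / ((k + 1).factorial : ℝ)))
        (c * x ^ (k + 1) / ((k + 1).factorial : ℝ)) - E k * x with hqdef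
      set q' : ℝ → ℝ := fun x => c * (cond d (L - x) x) ^ k / (k.factorial : ℝ) - E k with hq'def
      have hq : ∀ t ∈ s, HasDerivWithinAt q (q' t) s t := by
        intro t ht
        cases d
        · exact (seg_poly1 c (E k) k t).hasDerivWithinAt
        · exact (seg_poly2 c (E k) L k t).hasDerivWithinAt
      have hg : ∀ t ∈ s, HasDerivWithinAt (fun x => ε * iteratedDerivWithin j h s x - q x)
          (ε * iteratedDerivWithin (j + 1) h s t - q' t) s t :=
        fun t ht => ((hderiv j hjlt t ht).const_mul ε).sub (hq t ht)
      have hg0 : ∀ t ∈ s, 0 ≤ ε * iteratedDerivWithin (j + 1) h s t - q' t := by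
        intro t ht
        have hb := hbound t ht
        rw [← hjr] at hb
        simp only [hq'def]
        linarith
      have hmono := seg_aux_mono hg hg0
      have hfacpos : (0:ℝ) < ((k + 1).factorial : ℝ) := by positivity
      -- difference bounds for q
      have hq_left : ∀ t ∈ s, c * t ^ (k + 1) / ((k + 1).factorial : ℝ) - E k * L
          ≤ q t - q 0 := by
        intro t ht
        obtain ⟨ht0, htL⟩ := ht
        have hEt : E k * t ≤ E k * L := mul_le_mul_of_nonneg_left htL (hE0 k)
        cases d
        · simp only [hqdef, cond]
          ring_nf
          nlinarith [pow_nonneg ht0 (k+1)]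
        · simp only [hqdef, cond]
          have hpow : t ^ (k + 1) + (L - t) ^ (k + 1) ≤ L ^ (k + 1) := by
            have := pow_add_pow_le ht0 (by linarith : (0:ℝ) ≤ L - t) (Nat.succ_ne_zero k)
            simpa using this
          have hkey : c * t ^ (k + 1) / ((k + 1).factorial : ℝ)
              ≤ c * (L ^ (k + 1) - (L - t) ^ (k + 1)) / ((k + 1).factorial : ℝ) := by
            gcongr
            linarith
          have hL0 : L - (0:ℝ) = L := by ring
          rw [hL0]
          rw [mul_sub, sub_div] at hkey
          linarith [hkey]
      have hq_right : ∀ t ∈ s, c * (L - t) ^ (k + 1) / ((k + 1).factorial : ℝ) - E k * L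
          ≤ q L - q t := by
        intro t ht
        obtain ⟨ht0, htL⟩ := ht
        have hEt : E k * (L - t) ≤ E k * L := by
          have := mul_le_mul_of_nonneg_left (by linarith : L - t ≤ L) (hE0 k)
          linarith [this]
        cases d
        · simp only [hqdef, cond]
          have hpow : (L - t) ^ (k + 1) + t ^ (k + 1) ≤ L ^ (k + 1) := by
            have := pow_add_pow_le (by linarith : (0:ℝ) ≤ L - t) ht0 (Nat.succ_ne_zero k)
            simpa using this
          have hkey : c * (L - t) ^ (k + 1) / ((k + 1).factorial : ℝ)
              ≤ c * (L ^ (k + 1) - t ^ (k + 1)) / ((k + 1).factorial : ℝ) := by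
            gcongr
            linarith
          rw [mul_sub, sub_div] at hkey
          linarith [hkey]
        · simp only [hqdef, cond]
          have hLL : L - L = (0:ℝ) := by ring
          rw [hLL]
          have hz : (0:ℝ) ^ (k + 1) = 0 := by simp
          rw [hz]
          have h0t : 0 ≤ E k * t := mul_nonneg (hE0 k) ht0
          ring_nf
          linarith
      clear_value q q'
      by_cases hεσ : ε = σ j
      · -- integrate from the left endpoint; new direction false
        refine ⟨σ j, hσ j, false, ?_⟩
        intro t ht
        have hm := hmono h0s ht ht.1
        simp only at hm
        have hstart : -η ≤ ε * iteratedDerivWithin j h s 0 := by rw [hεσ]; exact hbd0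
        have hdiffq := hq_left t ht
        rw [hEsucc k, ← hεσ]
        simp only [cond]
        linarith
      · -- ε = -σ j : integrate from the right endpoint; new direction true
        have hεσ' : ε = -σ j := by
          rcases hε with h1 | h1 <;> rcases hσ j with h2 | h2 <;>
            simp [h1, h2] at hεσ ⊢
        refine ⟨σ j, hσ j, true, ?_⟩
        intro t ht
        have hm := hmono ht hLs ht.2
        simp only at hm
        have hstart : -η ≤ σ j * iteratedDerivWithin j h s L := hbdL
        have hdiffq := hq_right t ht
        rw [hEsucc k]
        simp only [cond]
        rw [hεσ'] at hm
        linarith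
  -- Apply the invariant at k = r - 1, i.e. to the first derivative.
  obtain ⟨ε, hε, d, hbound⟩ := inv (r - 1) (le_refl _)
  have hr1 : r - (r - 1) = 1 := by omega
  rw [hr1] at hbound
  set m : ℕ := r - 1 with hmdef
  have hm1 : m + 1 = r := by omega
  -- final comparison for h itself
  set q : ℝ → ℝ := fun x => cond d (-(c * (L - x) ^ (m + 1) / ((m + 1).factorial : ℝ)))
    (c * x ^ (m + 1) / ((m + 1).factorial : ℝ)) - E m * x with hqdef
  set q' : ℝ → ℝ := fun x => c * (cond d (L - x) x) ^ m / (m.factorial : ℝ) - E m with hq'def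
  have hq : ∀ t ∈ s, HasDerivWithinAt q (q' t) s t := by
    intro t ht
    cases d
    · exact (seg_poly1 c (E m) m t).hasDerivWithinAt
    · exact (seg_poly2 c (E m) L m t).hasDerivWithinAt
  have hh1 : ∀ t ∈ s, HasDerivWithinAt h (iteratedDerivWithin 1 h s t) s t := by
    intro t ht
    have := hderiv 0 (by omega) t ht
    simpa [iteratedDerivWithin_zero] using this
  have hg : ∀ t ∈ s, HasDerivWithinAt (fun x => ε * h x - q x)
      (ε * iteratedDerivWithin 1 h s t - q' t) s t :=
    fun t ht => ((hh1 t ht).const_mul ε).sub (hq t ht)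
  have hg0 : ∀ t ∈ s, 0 ≤ ε * iteratedDerivWithin 1 h s t - q' t := by
    intro t ht
    have hb := hbound t ht
    simp only [hq'def]
    linarith
  have hmono := seg_aux_mono hg hg0
  have hmL := hmono h0s hLs hL.le
  simp only at hmL
  have hqdiff : c * L ^ r / (r.factorial : ℝ) - E m * L ≤ q L - q 0 := by
    cases d
    · simp only [hqdef, cond]
      rw [hm1]
      have hz : (0:ℝ) ^ r = 0 := zero_pow (by omega)
      rw [hz]
      ring_nf
      have h0t : 0 ≤ E m * L := mul_nonneg (hE0 m) hL.le
      linarith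
    · simp only [hqdef, cond]
      have hLL : L - L = (0:ℝ) := by ring
      have hL0 : L - (0:ℝ) = L := by ring
      rw [hLL, hL0, hm1]
      have hz : (0:ℝ) ^ r = 0 := zero_pow (by omega)
      rw [hz]
      ring_nf
      linarith
  have habs : ε * (h L - h 0) ≤ 4 * hbar := by
    obtain ⟨h10, h11⟩ := abs_le.mp hv0
    obtain ⟨h20, h21⟩ := abs_le.mp hvL
    rcases hε with he | he <;> rw [he] <;> ring_nf <;> linarith
  have key : c * L ^ r / (r.factorial : ℝ) ≤ 4 * hbar + E m * L := by
    clear_value q q'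
    have hq0L : q L - q 0 ≤ ε * (h L - h 0) := by linarith
    linarith [hqdiff, habs]
  clear hderiv hbd hconv hcd inv hbound hq hh1 hg hg0 hmono hmL hqdiff habs hv0 hvL
  clear_value q q'
  clear hqdef hq'def q q'
  -- Arithmetic endgame
  set b : ℝ := hbar ^ (1 / (r : ℝ)) with hbdef
  have hb0 : 0 < b := Real.rpow_pos_of_pos hbar0 _
  have hb1 : b ≤ 1 := Real.rpow_le_one hbar0.le hbar1 (by positivity)
  have hrne : (r : ℝ) ≠ 0 := Nat.cast_ne_zero.mpr (by omega)
  have hbr : b ^ r = hbar := by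
    rw [hbdef, ← Real.rpow_natCast (hbar ^ (1 / (r : ℝ))) r, ← Real.rpow_mul hbar0.le]
    rw [one_div, inv_mul_cancel₀ hrne, Real.rpow_one]
  have hηb : η = b ^ m := by
    rw [hηdef, hbdef, ← Real.rpow_natCast (hbar ^ (1 / (r : ℝ))) m, ← Real.rpow_mul hbar0.le]
    congr 1
    have hcast : ((m : ℕ) : ℝ) = (r : ℝ) - 1 := by
      rw [hmdef]
      push_cast [Nat.cast_sub hr]
      ring
    rw [hcast]
    field_simp
  by_cases hLb : L ≤ b
  · have := mul_le_mul_of_nonneg_right hC1 hb0.le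
    calc L ≤ b := hLb
      _ = 1 * b := (one_mul b).symm
      _ ≤ C * b := by nlinarith []
  · push_neg at hLb
    have hrfacpos : (0:ℝ) < (r.factorial : ℝ) := by positivity
    rcases eq_or_lt_of_le hr with hr1' | hr2
    · -- r = 1
      have hrr : r = 1 := hr1'.symm
      have hm0 : m = 0 := by omega
      have hE0' : E m = 0 := by simp [hEdef, hm0]
      have hb1' : hbar = b := by rw [← hbr, hrr, pow_one]
      rw [hE0', hrr] at key
      simp only [pow_one, Nat.factorial_one, Nat.cast_one, div_one] at key
      -- c * L ≤ 4 * hbar = 4 * b, so L ≤ (8/κ) * b ≤ C * b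
      have hCk : 8 / κ ≤ C := le_add_of_nonneg_left (by positivity)
      have hL8 : L ≤ 8 / κ * b := by
        rw [hcdef] at key
        rw [div_mul_eq_mul_div, le_div_iff₀ hκ]
        nlinarith [hb1']
      calc L ≤ 8 / κ * b := hL8
        _ ≤ C * b := mul_le_mul_of_nonneg_right hCk hb0.le
    · -- r ≥ 2
      have hm1' : 1 ≤ m := by omega
      have hmne : m ≠ 0 := by omega
      have hbm0 : 0 < b ^ m := pow_pos hb0 m
      -- bound E m * L
      have hsum : (∑ i ∈ Finset.range m, L ^ i) * L ≤ m * (L + L ^ m) := by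
        rw [Finset.sum_mul]
        have hterm : ∀ i ∈ Finset.range m, L ^ i * L ≤ L + L ^ m := by
          intro i hi
          rw [Finset.mem_range] at hi
          rw [← pow_succ]
          rcases le_total L 1 with hL1 | hL1
          · have h1 : L ^ (i + 1) ≤ L ^ 1 := pow_le_pow_of_le_one hL.le hL1 (by omega)
            have h2 : (0:ℝ) ≤ L ^ m := by positivity
            rw [pow_one] at h1
            linarith
          · have h1 : L ^ (i + 1) ≤ L ^ m := pow_le_pow_right₀ hL1 (by omega)
            linarith
        calc ∑ i ∈ Finset.range m, L ^ i * L ≤ ∑ _i ∈ Finset.range m, (L + L ^ m) :=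
              Finset.sum_le_sum hterm
          _ = m * (L + L ^ m) := by
              rw [Finset.sum_const, Finset.card_range, nsmul_eq_mul]
      have hEmL : E m * L ≤ b ^ m * (m * (L + L ^ m)) := by
        rw [hEdef]
        simp only
        rw [hηb, mul_assoc]
        exact mul_le_mul_of_nonneg_left hsum hbm0.le
      have h4h : 4 * hbar ≤ 4 * (b ^ m * L) := by
        rw [← hbr]
        have : b ^ r = b ^ m * b := by rw [← pow_succ, hm1]
        rw [this]
        nlinarith [hbm0, hLb]
      have hrm : ((m:ℕ):ℝ) + 4 ≤ (r:ℝ) + 3 := by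
        have : ((m:ℕ):ℝ) = (r:ℝ) - 1 := by
          rw [hmdef]; push_cast [Nat.cast_sub hr]; ring
        rw [this]; linarith
      have hLm0 : (0:ℝ) ≤ L + L ^ m := by positivity
      have key2 : c * L ^ r / (r.factorial : ℝ) ≤ ((r:ℝ) + 3) * (b ^ m * (L + L ^ m)) := by
        have h1 : c * L ^ r / (r.factorial : ℝ)
            ≤ 4 * (b ^ m * L) + b ^ m * (m * (L + L ^ m)) := by linarith
        have h2 : 4 * (b ^ m * L) ≤ 4 * (b ^ m * (L + L ^ m)) := by
          have : (0:ℝ) ≤ L ^ m := by positivity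
          nlinarith [hbm0]
        nlinarith [hbm0, hLm0]
      -- so  κ/2 L^r ≤ r! (r+3) b^m (L + L^m)
      have key3 : κ / 2 * L ^ r ≤ (r.factorial : ℝ) * ((r:ℝ) + 3) * (b ^ m * (L + L ^ m)) := by
        rw [hcdef] at key2
        rw [div_le_iff₀ hrfacpos] at key2
        nlinarith [key2]
      rcases le_total L 1 with hL1 | hL1
      · -- L ≤ 1 : L^m ≤ L, get L^m ≤ A b^m
        have hLm : L ^ m ≤ L := by
          have := pow_le_pow_of_le_one hL.le hL1 hm1'
          calc L ^ m ≤ L ^ 1 := by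
                exact pow_le_pow_of_le_one hL.le hL1 hm1'
            _ = L := pow_one L
        have h2L : L + L ^ m ≤ 2 * L := by linarith
        have s1 : b ^ m * (L + L ^ m) ≤ b ^ m * (2 * L) :=
          mul_le_mul_of_nonneg_left h2L hbm0.le
        have key4 : κ / 2 * L ^ r ≤ (r.factorial : ℝ) * ((r:ℝ) + 3) * (b ^ m * (2 * L)) :=
          key3.trans (mul_le_mul_of_nonneg_left s1 (by positivity))
        have hLr : L ^ r = L ^ m * L := by rw [← pow_succ, hm1]
        have key5 : L ^ m ≤ A * b ^ m := by
          rw [hLr] at key4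
          rw [hAdef, div_mul_eq_mul_div, le_div_iff₀ hκ]
          nlinarith [hL]
        by_contra hcon
        push_neg at hcon
        have hCA : max 1 A * b ≤ C * b :=
          mul_le_mul_of_nonneg_right (le_add_of_nonneg_right (by positivity)) hb0.le
        have hlt : max 1 A * b < L := lt_of_le_of_lt hCA hcon
        have hppos : (0:ℝ) ≤ max 1 A * b := by positivity
        have hp := pow_lt_pow_left₀ hlt hppos hmne
        rw [mul_pow] at hp
        have hmax1 : (1:ℝ) ≤ max 1 A := le_max_left 1 A
        have hself : max 1 A ≤ (max 1 A) ^ m := le_self_pow₀ hmax1 hmne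
        have hAmax : A ≤ max 1 A := le_max_right 1 A
        nlinarith [hbm0, key5, hp, hself, hAmax]
      · -- 1 ≤ L : L ≤ L^m, get L ≤ A b^m ≤ A b
        have hLm : L ≤ L ^ m := le_self_pow₀ hL1 hmne
        have h2L : L + L ^ m ≤ 2 * L ^ m := by linarith
        have s1 : b ^ m * (L + L ^ m) ≤ b ^ m * (2 * L ^ m) :=
          mul_le_mul_of_nonneg_left h2L hbm0.le
        have key4 : κ / 2 * L ^ r ≤ (r.factorial : ℝ) * ((r:ℝ) + 3) * (b ^ m * (2 * L ^ m)) :=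
          key3.trans (mul_le_mul_of_nonneg_left s1 (by positivity))
        have hLr : L ^ r = L * L ^ m := by rw [← pow_succ', hm1]
        have hLmpos : (0:ℝ) < L ^ m := by positivity
        have key5 : L ≤ A * b ^ m := by
          rw [hLr] at key4
          rw [hAdef, div_mul_eq_mul_div, le_div_iff₀ hκ]
          nlinarith [hLmpos]
        have hbm_b : b ^ m ≤ b := by
          calc b ^ m ≤ b ^ 1 := pow_le_pow_of_le_one hb0.le hb1 hm1'
            _ = b := pow_one b
        have hAC : A ≤ C := le_add_of_le_of_nonneg (le_max_right 1 A) (by positivity)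
        calc L ≤ A * b ^ m := key5
          _ ≤ A * b := mul_le_mul_of_nonneg_left hbm_b hA0.le
          _ ≤ C * b := mul_le_mul_of_nonneg_right hAC hb0.le
end

section
/- (Cotlar–Stein lemma, finite version) Let E, F be Hilbert spaces and T₁,…,T_N : E → F bounded operators. Suppose there exist nonnegative functions a, b on {1,…,N}² with ‖Tᵢ* Tⱼ‖ ≤ a(i,j) and ‖Tᵢ Tⱼ*‖ ≤ b(i,j) for all i,j, and set A = max_i Σⱼ a(i,j)^(1/2), B = max_i Σⱼ b(i,j)^(1/2). Then ‖Σᵢ Tᵢ‖ ≤ A^(1/2)·B^(1/2). -/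
open Finset in
lemma cs_sqrt_prod {ι : Type*} (s : Finset ι) (g : ι → ℝ) (hg : ∀ i ∈ s, 0 ≤ g i) :
    Real.sqrt (∏ i ∈ s, g i) = ∏ i ∈ s, Real.sqrt (g i) := by
  induction s using Finset.cons_induction with
  | empty => simp
  | cons i s hi ih =>
      rw [Finset.prod_cons, Finset.prod_cons,
        Real.sqrt_mul (hg i (Finset.mem_cons_self _ _)),
        ih fun j hj => hg j (Finset.mem_cons_of_mem hj)]

lemma cs_sum_pow {R : Type*} [Semiring R] {κ : Type*} [Fintype κ] (c : κ → R) :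
    ∀ n : ℕ, (∑ k, c k) ^ n = ∑ f : Fin n → κ, (List.ofFn fun i => c (f i)).prod
  | 0 => by simp
  | (n+1) => by
      rw [pow_succ', cs_sum_pow c n, Finset.sum_mul_sum]
      rw [← Equiv.sum_comp (Fin.consEquiv fun _ : Fin (n+1) => κ)
        (fun g => (List.ofFn fun i => c (g i)).prod), Fintype.sum_prod_type]
      refine Finset.sum_congr rfl fun k _ => Finset.sum_congr rfl fun f _ => ?_
      simp [Fin.consEquiv, List.ofFn_succ]

lemma cs_pow_le_of_pow_le {x y C : ℝ} (hx : 0 ≤ x) (hy : 0 < y)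
    (h : ∀ k : ℕ, x ^ (2 ^ k) ≤ C * y ^ (2 ^ k)) : x ≤ y := by
  by_contra hcon
  push_neg at hcon
  have hr : 1 < x / y := (one_lt_div hy).2 hcon
  have htend : Filter.Tendsto (fun k : ℕ => (x / y) ^ (2 ^ k)) Filter.atTop Filter.atTop :=
    (tendsto_pow_atTop_atTop_of_one_lt hr).comp
      (tendsto_pow_atTop_atTop_of_one_lt one_lt_two)
  obtain ⟨k, hk⟩ := (htend.eventually_gt_atTop C).exists
  have : (x / y) ^ (2 ^ k) ≤ C := by
    rw [div_pow, div_le_iff₀ (by positivity)]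
    exact h k
  linarith

open ContinuousLinearMap in
lemma cs_bound_a {E F : Type*}
    [NormedAddCommGroup E] [InnerProductSpace ℂ E] [CompleteSpace E]
    [NormedAddCommGroup F] [InnerProductSpace ℂ F] [CompleteSpace F]
    {N : ℕ} (T : Fin N → E →L[ℂ] F) (a : Fin N → Fin N → ℝ)
    (ha0 : ∀ i j, 0 ≤ a i j)
    (ha : ∀ i j, ‖(ContinuousLinearMap.adjoint (T i)).comp (T j)‖ ≤ a i j) :
    ∀ (n : ℕ) (f : Fin n → Fin N × Fin N),
      ‖(List.ofFn fun i => (ContinuousLinearMap.adjoint (T (f i).1)).comp (T (f i).2)).prod‖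
        ≤ ∏ i, a (f i).1 (f i).2
  | 0, f => by
      simp only [List.ofFn_zero, List.prod_nil, Finset.univ_eq_empty, Finset.prod_empty]
      exact norm_id_le (E := E)
  | (n+1), f => by
      rw [List.ofFn_succ, List.prod_cons, Fin.prod_univ_succ]
      calc ‖((adjoint (T (f 0).1)).comp (T (f 0).2)) *
              (List.ofFn fun i => (adjoint (T (f i.succ).1)).comp (T (f i.succ).2)).prod‖
          ≤ ‖(adjoint (T (f 0).1)).comp (T (f 0).2)‖ *
            ‖(List.ofFn fun i => (adjoint (T (f i.succ).1)).comp (T (f i.succ).2)).prod‖ :=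
            norm_mul_le _ _
        _ ≤ a (f 0).1 (f 0).2 * ∏ i : Fin n, a (f i.succ).1 (f i.succ).2 := by
            apply mul_le_mul (ha _ _) (cs_bound_a T a ha0 ha n fun i => f i.succ)
              (norm_nonneg _) (ha0 _ _)

open ContinuousLinearMap in
lemma cs_bound_b {E F : Type*}
    [NormedAddCommGroup E] [InnerProductSpace ℂ E] [CompleteSpace E]
    [NormedAddCommGroup F] [InnerProductSpace ℂ F] [CompleteSpace F]
    {N : ℕ} (T : Fin N → E →L[ℂ] F) (b : Fin N → Fin N → ℝ)
    (hb0 : ∀ i j, 0 ≤ b i j)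
    (hb : ∀ i j, ‖(T i).comp (ContinuousLinearMap.adjoint (T j))‖ ≤ b i j) :
    ∀ (n : ℕ) (j : Fin N) (f : Fin (n+1) → Fin N × Fin N),
      ‖(T j).comp (List.ofFn fun i =>
          (ContinuousLinearMap.adjoint (T (f i).1)).comp (T (f i).2)).prod‖
        ≤ b j (f 0).1 * ((∏ i : Fin n, b (f i.castSucc).2 (f i.succ).1) * ‖T (f (Fin.last n)).2‖)
  | 0, j, f => by
      simp only [List.ofFn_succ, List.ofFn_zero, List.prod_cons, List.prod_nil, mul_one,
        Finset.univ_eq_empty, Finset.prod_empty, one_mul]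
      rw [← ContinuousLinearMap.comp_assoc]
      calc ‖((T j).comp (adjoint (T (f 0).1))).comp (T (f 0).2)‖
          ≤ ‖(T j).comp (adjoint (T (f 0).1))‖ * ‖T (f 0).2‖ := opNorm_comp_le _ _
        _ ≤ b j (f 0).1 * ‖T (f (Fin.last 0)).2‖ := by
            have : Fin.last 0 = 0 := rfl
            rw [this]
            exact mul_le_mul_of_nonneg_right (hb _ _) (norm_nonneg _)
  | (n+1), j, f => by
      rw [List.ofFn_succ, List.prod_cons]
      rw [show ((adjoint (T (f 0).1)).comp (T (f 0).2)) *
            (List.ofFn fun i : Fin (n+1) =>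
              (adjoint (T (f i.succ).1)).comp (T (f i.succ).2)).prod
          = (adjoint (T (f 0).1)).comp ((T (f 0).2).comp
            (List.ofFn fun i : Fin (n+1) =>
              (adjoint (T (f i.succ).1)).comp (T (f i.succ).2)).prod) from
        (ContinuousLinearMap.comp_assoc _ _ _)]
      rw [← ContinuousLinearMap.comp_assoc]
      calc ‖((T j).comp (adjoint (T (f 0).1))).comp ((T (f 0).2).comp
              (List.ofFn fun i : Fin (n+1) =>
                (adjoint (T (f i.succ).1)).comp (T (f i.succ).2)).prod)‖
          ≤ ‖(T j).comp (adjoint (T (f 0).1))‖ * ‖(T (f 0).2).comp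
              (List.ofFn fun i : Fin (n+1) =>
                (adjoint (T (f i.succ).1)).comp (T (f i.succ).2)).prod‖ := opNorm_comp_le _ _
        _ ≤ b j (f 0).1 * (b (f 0).2 (f (0 : Fin (n+1)).succ).1 *
              ((∏ i : Fin n, b (f (i.castSucc).succ).2 (f i.succ.succ).1) *
                ‖T (f (Fin.last n).succ).2‖)) := by
            exact mul_le_mul (hb _ _) (cs_bound_b T b hb0 hb n (f 0).2 fun i => f i.succ)
              (norm_nonneg _) (hb0 _ _)
        _ = b j (f 0).1 * ((∏ i : Fin (n+1), b (f i.castSucc).2 (f i.succ).1) *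
              ‖T (f (Fin.last (n+1))).2‖) := by
            rw [Fin.prod_univ_succ]
            simp only [Fin.succ_castSucc, Fin.succ_last, Fin.castSucc_zero]
            ring

open ContinuousLinearMap in
lemma cs_bound_b2 {E F : Type*}
    [NormedAddCommGroup E] [InnerProductSpace ℂ E] [CompleteSpace E]
    [NormedAddCommGroup F] [InnerProductSpace ℂ F] [CompleteSpace F]
    {N : ℕ} (T : Fin N → E →L[ℂ] F) (b : Fin N → Fin N → ℝ)
    (hb0 : ∀ i j, 0 ≤ b i j)
    (hb : ∀ i j, ‖(T i).comp (ContinuousLinearMap.adjoint (T j))‖ ≤ b i j)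
    (n : ℕ) (f : Fin (n+1) → Fin N × Fin N) :
    ‖(List.ofFn fun i =>
        (ContinuousLinearMap.adjoint (T (f i).1)).comp (T (f i).2)).prod‖
      ≤ ‖T (f 0).1‖ * ((∏ i : Fin n, b (f i.castSucc).2 (f i.succ).1) *
          ‖T (f (Fin.last n)).2‖) := by
  match n with
  | 0 =>
      simp only [List.ofFn_succ, List.ofFn_zero, List.prod_cons, List.prod_nil, mul_one,
        Finset.univ_eq_empty, Finset.prod_empty, one_mul]
      calc ‖(adjoint (T (f 0).1)).comp (T (f 0).2)‖
          ≤ ‖adjoint (T (f 0).1)‖ * ‖T (f 0).2‖ := opNorm_comp_le _ _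
        _ = ‖T (f 0).1‖ * ‖T (f (Fin.last 0)).2‖ := by
            rw [LinearIsometryEquiv.norm_map]
            rfl
  | (n+1) =>
      rw [List.ofFn_succ, List.prod_cons]
      rw [show ((adjoint (T (f 0).1)).comp (T (f 0).2)) *
            (List.ofFn fun i : Fin (n+1) =>
              (adjoint (T (f i.succ).1)).comp (T (f i.succ).2)).prod
          = (adjoint (T (f 0).1)).comp ((T (f 0).2).comp
            (List.ofFn fun i : Fin (n+1) =>
              (adjoint (T (f i.succ).1)).comp (T (f i.succ).2)).prod) from
        (ContinuousLinearMap.comp_assoc _ _ _)]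
      calc ‖(adjoint (T (f 0).1)).comp ((T (f 0).2).comp
              (List.ofFn fun i : Fin (n+1) =>
                (adjoint (T (f i.succ).1)).comp (T (f i.succ).2)).prod)‖
          ≤ ‖adjoint (T (f 0).1)‖ * ‖(T (f 0).2).comp
              (List.ofFn fun i : Fin (n+1) =>
                (adjoint (T (f i.succ).1)).comp (T (f i.succ).2)).prod‖ := opNorm_comp_le _ _
        _ ≤ ‖T (f 0).1‖ * (b (f 0).2 (f (0 : Fin (n+1)).succ).1 *
              ((∏ i : Fin n, b (f (i.castSucc).succ).2 (f i.succ.succ).1) *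
                ‖T (f (Fin.last n).succ).2‖)) := by
            rw [LinearIsometryEquiv.norm_map]
            exact mul_le_mul_of_nonneg_left
              (cs_bound_b T b hb0 hb n (f 0).2 fun i => f i.succ) (norm_nonneg _)
        _ = ‖T (f 0).1‖ * ((∏ i : Fin (n+1), b (f i.castSucc).2 (f i.succ).1) *
              ‖T (f (Fin.last (n+1))).2‖) := by
            rw [Fin.prod_univ_succ]
            simp only [Fin.succ_castSucc, Fin.succ_last, Fin.castSucc_zero]
            ring

lemma cs_pair_sum {N : ℕ} (sa sb : Fin N → Fin N → ℝ) {A B : ℝ}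
    (hsa0 : ∀ i j, 0 ≤ sa i j) (hsb0 : ∀ i j, 0 ≤ sb i j)
    (hA : ∀ i, ∑ j, sa i j ≤ A) (hB : ∀ i, ∑ j, sb i j ≤ B)
    (hA0 : 0 ≤ A) (j : Fin N) :
    ∑ p : Fin N × Fin N, sb j p.1 * sa p.1 p.2 ≤ B * A := by
  rw [Fintype.sum_prod_type]
  calc ∑ u, ∑ v, sb j u * sa u v = ∑ u, sb j u * ∑ v, sa u v := by
        simp [Finset.mul_sum]
    _ ≤ ∑ u, sb j u * A :=
        Finset.sum_le_sum fun u _ => mul_le_mul_of_nonneg_left (hA u) (hsb0 j u)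
    _ = (∑ u, sb j u) * A := (Finset.sum_mul _ _ _).symm
    _ ≤ B * A := mul_le_mul_of_nonneg_right (hB j) hA0

lemma cs_chain_aux {N : ℕ} (sa sb : Fin N → Fin N → ℝ) {A B : ℝ}
    (hsa0 : ∀ i j, 0 ≤ sa i j) (hsb0 : ∀ i j, 0 ≤ sb i j)
    (hA : ∀ i, ∑ j, sa i j ≤ A) (hB : ∀ i, ∑ j, sb i j ≤ B)
    (hA0 : 0 ≤ A) (hB0 : 0 ≤ B) :
    ∀ (n : ℕ) (j : Fin N),
      ∑ f : Fin (n+1) → Fin N × Fin N,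
        sb j (f 0).1 * ((∏ i, sa (f i).1 (f i).2) *
          ∏ i : Fin n, sb (f i.castSucc).2 (f i.succ).1)
        ≤ (B * A) ^ (n+1)
  | 0, j => by
      have h1 : ∑ f : Fin 1 → Fin N × Fin N,
          sb j (f 0).1 * ((∏ i, sa (f i).1 (f i).2) *
            ∏ i : Fin 0, sb (f i.castSucc).2 (f i.succ).1)
          = ∑ p : Fin N × Fin N, sb j p.1 * sa p.1 p.2 := by
        rw [← Equiv.sum_comp (Fin.consEquiv fun _ : Fin 1 => Fin N × Fin N),
          Fintype.sum_prod_type]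
        refine Finset.sum_congr rfl fun p _ => ?_
        simp [Fin.prod_univ_succ]
      rw [h1, pow_one]
      exact cs_pair_sum sa sb hsa0 hsb0 hA hB hA0 j
  | (n+1), j => by
      rw [← Equiv.sum_comp (Fin.consEquiv fun _ : Fin (n+2) => Fin N × Fin N),
        Fintype.sum_prod_type]
      calc ∑ p : Fin N × Fin N, ∑ f : Fin (n+1) → Fin N × Fin N,
            sb j (((Fin.consEquiv fun _ : Fin (n+2) => Fin N × Fin N) (p, f)) 0).1 *
              ((∏ i, sa (((Fin.consEquiv fun _ => Fin N × Fin N) (p, f)) i).1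
                  (((Fin.consEquiv fun _ => Fin N × Fin N) (p, f)) i).2) *
                ∏ i : Fin (n+1), sb (((Fin.consEquiv fun _ => Fin N × Fin N) (p, f)) i.castSucc).2
                  (((Fin.consEquiv fun _ => Fin N × Fin N) (p, f)) i.succ).1)
          = ∑ p : Fin N × Fin N, sb j p.1 * sa p.1 p.2 *
              ∑ f : Fin (n+1) → Fin N × Fin N,
                sb p.2 (f 0).1 * ((∏ i, sa (f i).1 (f i).2) *
                  ∏ i : Fin n, sb (f i.castSucc).2 (f i.succ).1) := by
            refine Finset.sum_congr rfl fun p _ => ?_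
            rw [Finset.mul_sum]
            refine Finset.sum_congr rfl fun f _ => ?_
            simp only [Fin.consEquiv_apply]
            have hsa' : ∏ i : Fin (n+2), sa ((Fin.cons p f : Fin (n+2) → _) i).1
                ((Fin.cons p f : Fin (n+2) → _) i).2
                = sa p.1 p.2 * ∏ i : Fin (n+1), sa (f i).1 (f i).2 := by
              rw [Fin.prod_univ_succ]; simp
            have hsb' : ∏ i : Fin (n+1), sb ((Fin.cons p f : Fin (n+2) → _) i.castSucc).2
                ((Fin.cons p f : Fin (n+2) → _) i.succ).1
                = sb p.2 (f 0).1 * ∏ i : Fin n, sb (f i.castSucc).2 (f i.succ).1 := by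
              rw [Fin.prod_univ_succ]
              refine congrArg₂ (· * ·) (by simp) ?_
              refine Finset.prod_congr rfl fun i _ => ?_
              rw [← Fin.succ_castSucc]
              simp
            rw [hsa', hsb', Fin.cons_zero]
            ring
        _ ≤ ∑ p : Fin N × Fin N, sb j p.1 * sa p.1 p.2 * (B * A) ^ (n+1) :=
            Finset.sum_le_sum fun p _ =>
              mul_le_mul_of_nonneg_left (cs_chain_aux sa sb hsa0 hsb0 hA hB hA0 hB0 n p.2)
                (mul_nonneg (hsb0 _ _) (hsa0 _ _))
        _ = (∑ p : Fin N × Fin N, sb j p.1 * sa p.1 p.2) * (B * A) ^ (n+1) :=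
            (Finset.sum_mul _ _ _).symm
        _ ≤ (B * A) * (B * A) ^ (n+1) :=
            mul_le_mul_of_nonneg_right (cs_pair_sum sa sb hsa0 hsb0 hA hB hA0 j)
              (by positivity)
        _ = (B * A) ^ (n+1+1) := by ring

lemma cs_sa_sum {N : ℕ} (sa : Fin N → Fin N → ℝ) {A : ℝ}
    (hA : ∀ i, ∑ j, sa i j ≤ A) :
    ∑ p : Fin N × Fin N, sa p.1 p.2 ≤ (N : ℝ) * A := by
  rw [Fintype.sum_prod_type]
  calc ∑ u, ∑ v, sa u v ≤ ∑ _u : Fin N, A := Finset.sum_le_sum fun u _ => hA u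
    _ = (N : ℝ) * A := by simp [mul_comm]

lemma cs_chain_main {N : ℕ} (sa sb : Fin N → Fin N → ℝ) {A B : ℝ}
    (hsa0 : ∀ i j, 0 ≤ sa i j) (hsb0 : ∀ i j, 0 ≤ sb i j)
    (hA : ∀ i, ∑ j, sa i j ≤ A) (hB : ∀ i, ∑ j, sb i j ≤ B)
    (hA0 : 0 ≤ A) (hB0 : 0 ≤ B) (n : ℕ) :
    ∑ f : Fin (n+1) → Fin N × Fin N,
      (∏ i, sa (f i).1 (f i).2) * ∏ i : Fin n, sb (f i.castSucc).2 (f i.succ).1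
      ≤ (N : ℝ) * A * (B * A) ^ n := by
  match n with
  | 0 =>
      have h1 : ∑ f : Fin 1 → Fin N × Fin N,
          (∏ i, sa (f i).1 (f i).2) * ∏ i : Fin 0, sb (f i.castSucc).2 (f i.succ).1
          = ∑ p : Fin N × Fin N, sa p.1 p.2 := by
        rw [← Equiv.sum_comp (Fin.consEquiv fun _ : Fin 1 => Fin N × Fin N),
          Fintype.sum_prod_type]
        refine Finset.sum_congr rfl fun p _ => ?_
        simp [Fin.prod_univ_succ]
      rw [h1, pow_zero, mul_one]
      exact cs_sa_sum sa hA
  | (n+1) =>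
      rw [← Equiv.sum_comp (Fin.consEquiv fun _ : Fin (n+2) => Fin N × Fin N),
        Fintype.sum_prod_type]
      calc ∑ p : Fin N × Fin N, ∑ f : Fin (n+1) → Fin N × Fin N,
            (∏ i, sa (((Fin.consEquiv fun _ : Fin (n+2) => Fin N × Fin N) (p, f)) i).1
                (((Fin.consEquiv fun _ => Fin N × Fin N) (p, f)) i).2) *
              ∏ i : Fin (n+1), sb (((Fin.consEquiv fun _ => Fin N × Fin N) (p, f)) i.castSucc).2
                (((Fin.consEquiv fun _ => Fin N × Fin N) (p, f)) i.succ).1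
          = ∑ p : Fin N × Fin N, sa p.1 p.2 *
              ∑ f : Fin (n+1) → Fin N × Fin N,
                sb p.2 (f 0).1 * ((∏ i, sa (f i).1 (f i).2) *
                  ∏ i : Fin n, sb (f i.castSucc).2 (f i.succ).1) := by
            refine Finset.sum_congr rfl fun p _ => ?_
            rw [Finset.mul_sum]
            refine Finset.sum_congr rfl fun f _ => ?_
            simp only [Fin.consEquiv_apply]
            have hsa' : ∏ i : Fin (n+2), sa ((Fin.cons p f : Fin (n+2) → _) i).1
                ((Fin.cons p f : Fin (n+2) → _) i).2
                = sa p.1 p.2 * ∏ i : Fin (n+1), sa (f i).1 (f i).2 := by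
              rw [Fin.prod_univ_succ]; simp
            have hsb' : ∏ i : Fin (n+1), sb ((Fin.cons p f : Fin (n+2) → _) i.castSucc).2
                ((Fin.cons p f : Fin (n+2) → _) i.succ).1
                = sb p.2 (f 0).1 * ∏ i : Fin n, sb (f i.castSucc).2 (f i.succ).1 := by
              rw [Fin.prod_univ_succ]
              refine congrArg₂ (· * ·) (by simp) ?_
              refine Finset.prod_congr rfl fun i _ => ?_
              rw [← Fin.succ_castSucc]
              simp
            rw [hsa', hsb']
            ring
        _ ≤ ∑ p : Fin N × Fin N, sa p.1 p.2 * (B * A) ^ (n+1) :=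
            Finset.sum_le_sum fun p _ =>
              mul_le_mul_of_nonneg_left (cs_chain_aux sa sb hsa0 hsb0 hA hB hA0 hB0 n p.2)
                (hsa0 _ _)
        _ = (∑ p : Fin N × Fin N, sa p.1 p.2) * (B * A) ^ (n+1) := (Finset.sum_mul _ _ _).symm
        _ ≤ ((N : ℝ) * A) * (B * A) ^ (n+1) :=
            mul_le_mul_of_nonneg_right (cs_sa_sum sa hA) (by positivity)

open ContinuousLinearMap in
lemma cs_tuple {E F : Type*}
    [NormedAddCommGroup E] [InnerProductSpace ℂ E] [CompleteSpace E]
    [NormedAddCommGroup F] [InnerProductSpace ℂ F] [CompleteSpace F]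
    {N : ℕ} (T : Fin N → E →L[ℂ] F) (a b : Fin N → Fin N → ℝ)
    (ha0 : ∀ i j, 0 ≤ a i j) (hb0 : ∀ i j, 0 ≤ b i j)
    (ha : ∀ i j, ‖(ContinuousLinearMap.adjoint (T i)).comp (T j)‖ ≤ a i j)
    (hb : ∀ i j, ‖(T i).comp (ContinuousLinearMap.adjoint (T j))‖ ≤ b i j)
    {A B : ℝ} (hA0 : 0 ≤ A) (hB0 : 0 ≤ B)
    (hTA : ∀ i, ‖T i‖ ≤ A) (hTB : ∀ i, ‖T i‖ ≤ B)
    (n : ℕ) (f : Fin (n+1) → Fin N × Fin N) :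
    ‖(List.ofFn fun i =>
        (ContinuousLinearMap.adjoint (T (f i).1)).comp (T (f i).2)).prod‖
      ≤ (Real.sqrt A * Real.sqrt B) *
        ((∏ i, Real.sqrt (a (f i).1 (f i).2)) *
          ∏ i : Fin n, Real.sqrt (b (f i.castSucc).2 (f i.succ).1)) := by
  set x := ‖(List.ofFn fun i =>
      (ContinuousLinearMap.adjoint (T (f i).1)).comp (T (f i).2)).prod‖ with hx
  have hI := cs_bound_a T a ha0 ha (n+1) f
  have hII := cs_bound_b2 T b hb0 hb n f
  have hPa : (0:ℝ) ≤ ∏ i, a (f i).1 (f i).2 :=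
    Finset.prod_nonneg fun i _ => ha0 _ _
  have hPb : (0:ℝ) ≤ ∏ i : Fin n, b (f i.castSucc).2 (f i.succ).1 :=
    Finset.prod_nonneg fun i _ => hb0 _ _
  have hxx : x * x ≤ (∏ i, a (f i).1 (f i).2) *
      (‖T (f 0).1‖ * ((∏ i : Fin n, b (f i.castSucc).2 (f i.succ).1) *
        ‖T (f (Fin.last n)).2‖)) :=
    mul_le_mul hI hII (norm_nonneg _) hPa
  calc x = Real.sqrt (x * x) := (Real.sqrt_mul_self (norm_nonneg _)).symm
    _ ≤ Real.sqrt ((∏ i, a (f i).1 (f i).2) *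
        (‖T (f 0).1‖ * ((∏ i : Fin n, b (f i.castSucc).2 (f i.succ).1) *
          ‖T (f (Fin.last n)).2‖))) := Real.sqrt_le_sqrt hxx
    _ = (Real.sqrt ‖T (f 0).1‖ * Real.sqrt ‖T (f (Fin.last n)).2‖) *
        ((∏ i, Real.sqrt (a (f i).1 (f i).2)) *
          ∏ i : Fin n, Real.sqrt (b (f i.castSucc).2 (f i.succ).1)) := by
        rw [Real.sqrt_mul hPa, Real.sqrt_mul (norm_nonneg _), Real.sqrt_mul hPb,
          cs_sqrt_prod _ _ (fun i _ => ha0 _ _), cs_sqrt_prod _ _ (fun i _ => hb0 _ _)]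
        ring
    _ ≤ (Real.sqrt A * Real.sqrt B) *
        ((∏ i, Real.sqrt (a (f i).1 (f i).2)) *
          ∏ i : Fin n, Real.sqrt (b (f i.castSucc).2 (f i.succ).1)) := by
        refine mul_le_mul_of_nonneg_right
          (mul_le_mul (Real.sqrt_le_sqrt (hTA _)) (Real.sqrt_le_sqrt (hTB _))
            (Real.sqrt_nonneg _) (Real.sqrt_nonneg _)) ?_
        exact mul_nonneg (Finset.prod_nonneg fun i _ => Real.sqrt_nonneg _)
          (Finset.prod_nonneg fun i _ => Real.sqrt_nonneg _)

theorem cotlar_stein_finite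
    {E F : Type*}
    [NormedAddCommGroup E] [InnerProductSpace ℂ E] [CompleteSpace E]
    [NormedAddCommGroup F] [InnerProductSpace ℂ F] [CompleteSpace F]
    (N : ℕ) (T : Fin N → E →L[ℂ] F)
    (a b : Fin N → Fin N → ℝ)
    (ha0 : ∀ i j, 0 ≤ a i j) (hb0 : ∀ i j, 0 ≤ b i j)
    (ha : ∀ i j, ‖(ContinuousLinearMap.adjoint (T i)).comp (T j)‖ ≤ a i j)
    (hb : ∀ i j, ‖(T i).comp (ContinuousLinearMap.adjoint (T j))‖ ≤ b i j)
    (A B : ℝ)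
    (hA : ∀ i, ∑ j, Real.sqrt (a i j) ≤ A)
    (hB : ∀ i, ∑ j, Real.sqrt (b i j) ≤ B) :
    ‖∑ i, T i‖ ≤ Real.sqrt A * Real.sqrt B := by
  classical
  open ContinuousLinearMap in
  rcases Nat.eq_zero_or_pos N with rfl | hN
  · simp only [Finset.univ_eq_empty, Finset.sum_empty, norm_zero]
    positivity
  -- basic positivity facts
  have hA0 : 0 ≤ A :=
    le_trans (Finset.sum_nonneg fun j _ => Real.sqrt_nonneg _) (hA ⟨0, hN⟩)
  have hB0 : 0 ≤ B :=
    le_trans (Finset.sum_nonneg fun j _ => Real.sqrt_nonneg _) (hB ⟨0, hN⟩)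
  -- each ‖T i‖ is bounded by A and by B
  have hTA : ∀ i, ‖T i‖ ≤ A := by
    intro i
    have h1 : ‖T i‖ * ‖T i‖ = ‖(ContinuousLinearMap.adjoint (T i)).comp (T i)‖ :=
      (ContinuousLinearMap.norm_adjoint_comp_self (T i)).symm
    calc ‖T i‖ = Real.sqrt (‖T i‖ * ‖T i‖) := (Real.sqrt_mul_self (norm_nonneg _)).symm
      _ ≤ Real.sqrt (a i i) := Real.sqrt_le_sqrt (h1 ▸ ha i i)
      _ ≤ ∑ j, Real.sqrt (a i j) :=
          Finset.single_le_sum (fun j _ => Real.sqrt_nonneg _) (Finset.mem_univ i)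
      _ ≤ A := hA i
  have hTB : ∀ i, ‖T i‖ ≤ B := by
    intro i
    have h1 : ‖T i‖ * ‖T i‖ = ‖(T i).comp (ContinuousLinearMap.adjoint (T i))‖ := by
      have := (ContinuousLinearMap.norm_adjoint_comp_self
        (ContinuousLinearMap.adjoint (T i))).symm
      rwa [ContinuousLinearMap.adjoint_adjoint, LinearIsometryEquiv.norm_map] at this
    calc ‖T i‖ = Real.sqrt (‖T i‖ * ‖T i‖) := (Real.sqrt_mul_self (norm_nonneg _)).symm
      _ ≤ Real.sqrt (b i i) := Real.sqrt_le_sqrt (h1 ▸ hb i i)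
      _ ≤ ∑ j, Real.sqrt (b i j) :=
          Finset.single_le_sum (fun j _ => Real.sqrt_nonneg _) (Finset.mem_univ i)
      _ ≤ B := hB i
  -- degenerate cases A = 0 or B = 0
  rcases hA0.lt_or_eq with hApos | hAz
  swap
  · have : ‖∑ i, T i‖ ≤ 0 := by
      refine le_trans (norm_sum_le _ _) ?_
      refine le_trans (Finset.sum_le_sum fun i _ => hTA i) ?_
      simp [← hAz]
    exact le_trans this (by positivity)
  rcases hB0.lt_or_eq with hBpos | hBz
  swap
  · have : ‖∑ i, T i‖ ≤ 0 := by
      refine le_trans (norm_sum_le _ _) ?_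
      refine le_trans (Finset.sum_le_sum fun i _ => hTB i) ?_
      simp [← hBz]
    exact le_trans this (by positivity)
  -- the main case
  set S : E →L[ℂ] F := ∑ i, T i with hS
  set P : E →L[ℂ] E := (ContinuousLinearMap.adjoint S).comp S with hP
  have hPsum : P = ∑ p : Fin N × Fin N,
      (ContinuousLinearMap.adjoint (T p.1)).comp (T p.2) := by
    rw [hP, hS, map_sum, ContinuousLinearMap.finset_sum_comp]
    rw [Fintype.sum_prod_type]
    exact Finset.sum_congr rfl fun i _ => ContinuousLinearMap.comp_finset_sum _ _
  -- norm bound on powers of P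
  have hPow : ∀ n : ℕ, ‖P ^ (n+1)‖ ≤
      (Real.sqrt A * Real.sqrt B) * ((N : ℝ) * A * (B * A) ^ n) := by
    intro n
    have hexp : P ^ (n+1) = ∑ f : Fin (n+1) → Fin N × Fin N,
        (List.ofFn fun i =>
          (ContinuousLinearMap.adjoint (T (f i).1)).comp (T (f i).2)).prod := by
      rw [hPsum]
      exact cs_sum_pow _ (n+1)
    rw [hexp]
    calc ‖∑ f : Fin (n+1) → Fin N × Fin N,
          (List.ofFn fun i =>
            (ContinuousLinearMap.adjoint (T (f i).1)).comp (T (f i).2)).prod‖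
        ≤ ∑ f : Fin (n+1) → Fin N × Fin N,
          ‖(List.ofFn fun i =>
            (ContinuousLinearMap.adjoint (T (f i).1)).comp (T (f i).2)).prod‖ :=
          norm_sum_le _ _
      _ ≤ ∑ f : Fin (n+1) → Fin N × Fin N,
          (Real.sqrt A * Real.sqrt B) *
            ((∏ i, Real.sqrt (a (f i).1 (f i).2)) *
              ∏ i : Fin n, Real.sqrt (b (f i.castSucc).2 (f i.succ).1)) :=
          Finset.sum_le_sum fun f _ =>
            cs_tuple T a b ha0 hb0 ha hb hA0 hB0 hTA hTB n f
      _ = (Real.sqrt A * Real.sqrt B) *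
            ∑ f : Fin (n+1) → Fin N × Fin N,
              ((∏ i, Real.sqrt (a (f i).1 (f i).2)) *
                ∏ i : Fin n, Real.sqrt (b (f i.castSucc).2 (f i.succ).1)) :=
          (Finset.mul_sum _ _ _).symm
      _ ≤ (Real.sqrt A * Real.sqrt B) * ((N : ℝ) * A * (B * A) ^ n) := by
          refine mul_le_mul_of_nonneg_left ?_ (by positivity)
          exact cs_chain_main (fun i j => Real.sqrt (a i j)) (fun i j => Real.sqrt (b i j))
            (fun i j => Real.sqrt_nonneg _) (fun i j => Real.sqrt_nonneg _)
            hA hB hA0 hB0 n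
  -- P is self-adjoint, so ‖P‖ ^ 2^k = ‖P ^ 2^k‖
  have hsa : IsSelfAdjoint P := by
    rw [ContinuousLinearMap.isSelfAdjoint_iff', hP, ContinuousLinearMap.adjoint_comp,
      ContinuousLinearMap.adjoint_adjoint]
  have hnormpow : ∀ k : ℕ, ‖P‖ ^ (2 ^ k) = ‖P ^ (2 ^ k)‖ := by
    intro k
    have := hsa.nnnorm_pow_two_pow k
    have h2 : (‖P ^ 2 ^ k‖₊ : ℝ) = ((‖P‖₊ ^ 2 ^ k : NNReal) : ℝ) := by rw [this]
    simpa [coe_nnnorm] using h2.symm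
  -- conclude ‖P‖ ≤ A * B
  have hPle : ‖P‖ ≤ A * B := by
    refine cs_pow_le_of_pow_le (norm_nonneg P) (by positivity) (C :=
      (Real.sqrt A * Real.sqrt B) * ((N : ℝ) * A) / (A * B)) ?_
    intro k
    obtain ⟨m, hm⟩ : ∃ m, 2 ^ k = m + 1 :=
      ⟨2 ^ k - 1, (Nat.succ_pred_eq_of_pos (by positivity)).symm⟩
    rw [hnormpow k, hm]
    refine le_trans (hPow m) (le_of_eq ?_)
    have hABne : (A * B) ≠ 0 := by positivity
    field_simp
    ring
  -- finish
  have hSS : ‖S‖ * ‖S‖ ≤ A * B := by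
    rw [← ContinuousLinearMap.norm_adjoint_comp_self S]
    exact hPle
  calc ‖S‖ = Real.sqrt (‖S‖ * ‖S‖) := (Real.sqrt_mul_self (norm_nonneg _)).symm
    _ ≤ Real.sqrt (A * B) := Real.sqrt_le_sqrt hSS
    _ = Real.sqrt A * Real.sqrt B := Real.sqrt_mul hA0 B
end

section
/- Let h : ℝ → ℝ be r times continuously differentiable on an interval I with |h^(r)| ≥ κ > 0 on I, let ψ be a bounded measurable function supported in I with |ψ| ≤ M, and let β : ℝ → ℝ be measurable with support in [1/2, 2] and |β| ≤ 1. Then for every ħ > 0, ∫_I |ψ(t)·β(ħ^(−1) h(t))| dt ≤ 2^(r−1)·M·(2·r!/κ)^(1/r)·(2ħ)^(1/r). -/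
set_option maxHeartbeats 1000000

open MeasureTheory

section auxiliary

open Set Polynomial Finset

/-- iterated Rolle -/
lemma iterated_rolle (U : Set ℝ) (hU : IsOpen U) :
    ∀ (k : ℕ) (g : ℝ → ℝ), ContDiffOn ℝ k g U →
    ∀ x : ℕ → ℝ, (∀ i, i < k → x i < x (i + 1)) →
    Set.Icc (x 0) (x k) ⊆ U →
    (∀ i, i ≤ k → g (x i) = 0) →
    ∃ ξ ∈ Set.Icc (x 0) (x k), iteratedDeriv k g ξ = 0 := by
  intro k
  induction k with
  | zero =>
    intro g hg x _ hsub hz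
    exact ⟨x 0, by simp, by simpa [iteratedDeriv_zero] using hz 0 le_rfl⟩
  | succ k ih =>
    intro g hg x hlt hsub hz
    have hmono : ∀ i j, i ≤ j → j ≤ k + 1 → x i ≤ x j := by
      intro i j hij hjk
      induction j with
      | zero => have : i = 0 := by omega
                simp [this]
      | succ m ihm =>
        rcases Nat.lt_or_ge i (m+1) with hlt' | hge
        · exact le_trans (ihm (by omega) (by omega)) (le_of_lt (hlt m (by omega)))
        · have : i = m + 1 := by omega
          simp [this]
    have hR : ∀ i : ℕ, ∃ y : ℝ, i ≤ k →
        y ∈ Set.Ioo (x i) (x (i + 1)) ∧ deriv g y = 0 := by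
      intro i
      by_cases hi : i ≤ k
      · have hcont : ContinuousOn g (Set.Icc (x i) (x (i+1))) := by
          apply hg.continuousOn.mono
          refine subset_trans ?_ hsub
          exact Set.Icc_subset_Icc (hmono 0 i (by omega) (by omega))
            (hmono (i+1) (k+1) (by omega) le_rfl)
        obtain ⟨y, hy, hdy⟩ := exists_deriv_eq_zero (hlt i (by omega)) hcont
          (by rw [hz i (by omega), hz (i+1) (by omega)])
        exact ⟨y, fun _ => ⟨hy, hdy⟩⟩
      · exact ⟨0, fun h => absurd h hi⟩
    choose y hy using hR
    have hysub : Set.Icc (y 0) (y k) ⊆ U := by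
      intro t ht
      apply hsub
      constructor
      · exact le_trans (le_of_lt (hy 0 (by omega)).1.1) ht.1
      · exact le_trans ht.2 (le_trans (le_of_lt (hy k le_rfl).1.2)
          (hmono (k+1) (k+1) le_rfl le_rfl))
    have hg' : ContDiffOn ℝ k (deriv g) U := by
      apply hg.deriv_of_isOpen hU
      exact_mod_cast le_rfl
    obtain ⟨ξ, hξ, hξd⟩ := ih (deriv g) hg' y
      (fun i hik => lt_trans (hy i (by omega)).1.2
        (lt_of_le_of_lt (le_refl _) (hy (i+1) (by omega)).1.1))
      hysub (fun i hik => (hy i hik).2)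
    refine ⟨ξ, ?_, ?_⟩
    · constructor
      · exact le_trans (le_of_lt (hy 0 (by omega)).1.1) hξ.1
      · exact le_trans hξ.2 (le_of_lt (hy k le_rfl).1.2)
    · rw [iteratedDeriv_succ']
      exact hξd

-- helper: iteratedDeriv of a polynomial eval
lemma iteratedDeriv_polynomial (p : Polynomial ℝ) (n : ℕ) :
    iteratedDeriv n (fun t => p.eval t) = fun t => (Polynomial.derivative^[n] p).eval t := by
  induction n with
  | zero => simp
  | succ n ihn =>
    rw [iteratedDeriv_succ, ihn]
    funext t
    rw [Function.iterate_succ_apply']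
    exact Polynomial.deriv _

-- helper: within = global at interior points
lemma iteratedDerivWithin_eq_interior {f : ℝ → ℝ} {I : Set ℝ} {n : ℕ} {x : ℝ}
    (hx : x ∈ interior I) :
    iteratedDerivWithin n f I x = iteratedDeriv n f x := by
  have h1 : iteratedFDerivWithin ℝ n f I x = iteratedFDerivWithin ℝ n f (I ∩ interior I) x :=
    (iteratedFDerivWithin_inter (isOpen_interior.mem_nhds hx)).symm
  have h2 : I ∩ interior I = interior I := Set.inter_eq_self_of_subset_right interior_subset
  rw [iteratedDerivWithin, iteratedDeriv, h1, h2,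
    iteratedFDerivWithin_of_isOpen n isOpen_interior hx]

lemma iteratedDerivWithin_eq_of_isOpen {f : ℝ → ℝ} {U : Set ℝ} {n : ℕ} {x : ℝ}
    (hU : IsOpen U) (hx : x ∈ U) :
    iteratedDerivWithin n f U x = iteratedDeriv n f x := by
  rw [iteratedDerivWithin, iteratedDeriv, iteratedFDerivWithin_of_isOpen n hU hx]

lemma polynomial_contDiff (p : Polynomial ℝ) {n : WithTop ℕ∞} :
    ContDiff ℝ n fun t => p.eval t := by
  induction p using Polynomial.induction_on' with
  | add p q hp hq => simpa [Polynomial.eval_add] using hp.add hq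
  | monomial k a =>
    simpa [Polynomial.eval_monomial] using (contDiff_const (c := a)).mul (contDiff_id.pow k)

lemma coeff_lagrange_basis (s : Finset ℕ) (v : ℕ → ℝ) (hvs : Set.InjOn v s)
    (j : ℕ) (hj : j ∈ s) :
    (Lagrange.basis s v j).coeff (s.card - 1) = ∏ i ∈ s.erase j, (v j - v i)⁻¹ := by
  rw [← Lagrange.natDegree_basis hvs hj, Polynomial.coeff_natDegree, Lagrange.basis,
    Polynomial.leadingCoeff_prod]
  refine Finset.prod_congr rfl fun i hi => ?_
  rw [Lagrange.basisDivisor, Polynomial.leadingCoeff_mul, Polynomial.leadingCoeff_C,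
    Polynomial.leadingCoeff_X_sub_C, mul_one]

lemma exists_divided_diff (S : Set ℝ) (hS : S.OrdConnected) (r : ℕ) (hr : 1 ≤ r)
    (g : ℝ → ℝ) (hg : ContDiffOn ℝ r g S)
    (x : ℕ → ℝ) (hlt : ∀ i, i < r → x i < x (i + 1)) (hmem : ∀ i, i ≤ r → x i ∈ S) :
    ∃ ξ ∈ Set.Ioo (x 0) (x r),
      iteratedDeriv r g ξ =
        (r.factorial : ℝ) * ∑ j ∈ Finset.range (r + 1),
          g (x j) * ∏ i ∈ (Finset.range (r + 1)).erase j, (x j - x i)⁻¹ := by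
  have hmono : ∀ i j, i ≤ j → j ≤ r → x i ≤ x j := by
    intro i j hij hjk
    induction j with
    | zero => have : i = 0 := by omega
              simp [this]
    | succ m ihm =>
      rcases Nat.lt_or_ge i (m + 1) with hlt' | hge
      · exact le_trans (ihm (by omega) (by omega)) (le_of_lt (hlt m (by omega)))
      · have : i = m + 1 := by omega
        simp [this]
  have hstrict : ∀ i j, i < j → j ≤ r → x i < x j := by
    intro i j hij hjk
    calc x i < x (i + 1) := hlt i (by omega)
    _ ≤ x j := hmono (i + 1) j (by omega) hjk
  have hinj : Set.InjOn x (Finset.range (r + 1)) := by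
    intro a ha b hb hab
    simp only [Finset.coe_range, Set.mem_Iio] at ha hb
    by_contra hne
    rcases Nat.lt_or_ge a b with hl | hgt
    · exact absurd hab (ne_of_lt (hstrict a b hl (by omega)))
    · have : b < a := by omega
      exact absurd hab.symm (ne_of_lt (hstrict b a this (by omega)))
  set P : Polynomial ℝ :=
    Lagrange.interpolate (Finset.range (r + 1)) x (fun i => g (x i)) with hP
  set G : ℝ → ℝ := fun t => g t - P.eval t with hG
  have hGz : ∀ i, i ≤ r → G (x i) = 0 := by
    intro i hi
    have := Lagrange.eval_interpolate_at_node (fun i => g (x i)) hinj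
      (Finset.mem_range.mpr (by omega : i < r + 1))
    rw [← hP] at this
    simp [hG, this]
  have hIcc : Set.Icc (x 0) (x r) ⊆ S := hS.out (hmem 0 (by omega)) (hmem r le_rfl)
  have hGsm : ContDiffOn ℝ r G S := hg.sub (polynomial_contDiff P).contDiffOn
  -- first Rolle step
  have hR : ∀ i : ℕ, ∃ y : ℝ, i ≤ r - 1 →
      y ∈ Set.Ioo (x i) (x (i + 1)) ∧ deriv G y = 0 := by
    intro i
    by_cases hi : i ≤ r - 1
    · have hcont : ContinuousOn G (Set.Icc (x i) (x (i + 1))) := by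
        apply hGsm.continuousOn.mono
        refine subset_trans (Set.Icc_subset_Icc (hmono 0 i (by omega) (by omega))
          (hmono (i + 1) r (by omega) le_rfl)) hIcc
      obtain ⟨y, hy, hdy⟩ := exists_deriv_eq_zero (hlt i (by omega)) hcont
        (by rw [hGz i (by omega), hGz (i + 1) (by omega)])
      exact ⟨y, fun _ => ⟨hy, hdy⟩⟩
    · exact ⟨0, fun h => absurd h hi⟩
  choose y hy using hR
  set U : Set ℝ := interior S with hU
  have hIooU : Set.Ioo (x 0) (x r) ⊆ U :=
    isOpen_Ioo.subset_interior_iff.mpr (subset_trans Set.Ioo_subset_Icc_self hIcc)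
  have hyIoo : ∀ i, i ≤ r - 1 → y i ∈ Set.Ioo (x 0) (x r) := by
    intro i hi
    constructor
    · exact lt_of_le_of_lt (hmono 0 i (by omega) (by omega)) (hy i hi).1.1
    · exact lt_of_lt_of_le (hy i hi).1.2 (hmono (i + 1) r (by omega) le_rfl)
  have hG' : ContDiffOn ℝ (r - 1 : ℕ) (deriv G) U := by
    apply (hGsm.mono interior_subset).deriv_of_isOpen isOpen_interior
    have : ((r - 1 : ℕ) : WithTop ℕ∞) + 1 = (r : WithTop ℕ∞) := by
      have : (r - 1) + 1 = r := by omega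
      exact_mod_cast congrArg (Nat.cast : ℕ → WithTop ℕ∞) this
    rw [this]
  obtain ⟨ξ, hξmem, hξd⟩ := iterated_rolle U isOpen_interior (r - 1) (deriv G) hG' y
    (fun i hik => lt_trans (hy i (by omega)).1.2 (hy (i + 1) (by omega)).1.1)
    (by
      intro t ht
      apply hIooU
      constructor
      · exact lt_of_lt_of_le (hyIoo 0 (by omega)).1 ht.1
      · exact lt_of_le_of_lt ht.2 (hyIoo (r - 1) le_rfl).2)
    (fun i hik => (hy i hik).2)
  have hξIoo : ξ ∈ Set.Ioo (x 0) (x r) := by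
    constructor
    · exact lt_of_lt_of_le (hyIoo 0 (by omega)).1 hξmem.1
    · exact lt_of_le_of_lt hξmem.2 (hyIoo (r - 1) le_rfl).2
  have hξU : ξ ∈ U := hIooU hξIoo
  have hGiter : iteratedDeriv r G ξ = 0 := by
    have hsucc : r = (r - 1) + 1 := by omega
    rw [hsucc, iteratedDeriv_succ']
    exact hξd
  -- split iterated derivative
  have hgU : ContDiffOn ℝ r g U := hg.mono interior_subset
  have hpU : ContDiffOn ℝ r (fun t => P.eval t) U := (polynomial_contDiff P).contDiffOn
  have hsplit : iteratedDeriv r G ξ = iteratedDeriv r g ξ - iteratedDeriv r (fun t => P.eval t) ξ := by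
    have h1 : iteratedDeriv r G ξ = iteratedDerivWithin r G U ξ :=
      (iteratedDerivWithin_eq_of_isOpen isOpen_interior hξU).symm
    have h2 : iteratedDerivWithin r G U ξ =
        iteratedDerivWithin r g U ξ - iteratedDerivWithin r (fun t => P.eval t) U ξ := by
      have : G = g - (fun t => P.eval t) := rfl
      rw [this]
      exact iteratedDerivWithin_sub hξU isOpen_interior.uniqueDiffOn (hgU ξ hξU) (hpU ξ hξU)
    rw [h1, h2, iteratedDerivWithin_eq_of_isOpen isOpen_interior hξU,
      iteratedDerivWithin_eq_of_isOpen isOpen_interior hξU]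
  -- compute polynomial part
  have hPdeg : P.natDegree ≤ r := by
    by_cases hP0 : P = 0
    · simp [hP0]
    · have := Lagrange.degree_interpolate_lt (fun i => g (x i)) hinj
      rw [Finset.card_range] at this
      have := (Polynomial.natDegree_lt_iff_degree_lt hP0).mpr this
      omega
  have hQdeg : (Polynomial.derivative^[r] P).natDegree ≤ 0 := by
    have := Polynomial.natDegree_iterate_derivative P r
    omega
  have hQC : Polynomial.derivative^[r] P = Polynomial.C ((Polynomial.derivative^[r] P).coeff 0) :=
    Polynomial.eq_C_of_natDegree_le_zero hQdeg
  have hQ0 : (Polynomial.derivative^[r] P).coeff 0 = (r.factorial : ℝ) * P.coeff r := by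
    rw [Polynomial.coeff_iterate_derivative]
    simp [Nat.descFactorial_self, nsmul_eq_mul]
  have hPcoeff : P.coeff r = ∑ j ∈ Finset.range (r + 1),
      g (x j) * ∏ i ∈ (Finset.range (r + 1)).erase j, (x j - x i)⁻¹ := by
    rw [hP, Lagrange.interpolate_apply, Polynomial.finset_sum_coeff]
    refine Finset.sum_congr rfl fun j hj => ?_
    rw [Polynomial.coeff_C_mul]
    congr 1
    have hc := coeff_lagrange_basis (Finset.range (r + 1)) x hinj j hj
    rw [Finset.card_range] at hc
    simp only [Nat.add_sub_cancel] at hc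
    exact hc
  have hpoly : iteratedDeriv r (fun t => P.eval t) ξ =
      (r.factorial : ℝ) * ∑ j ∈ Finset.range (r + 1),
        g (x j) * ∏ i ∈ (Finset.range (r + 1)).erase j, (x j - x i)⁻¹ := by
    have heval : (Polynomial.derivative^[r] P).eval ξ = (r.factorial : ℝ) * P.coeff r := by
      rw [hQC, Polynomial.eval_C, hQ0]
    have := congrFun (iteratedDeriv_polynomial P r) ξ
    rw [this, heval, hPcoeff]
  refine ⟨ξ, hξIoo, ?_⟩
  have := hsplit
  rw [hGiter] at this
  rw [← hpoly]
  linarith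

lemma iteratedDeriv_const_add' {n : ℕ} (hn : 0 < n) (c : ℝ) (f : ℝ → ℝ) (x : ℝ) :
    iteratedDeriv n (fun t => c + f t) x = iteratedDeriv n f x := by
  rw [← iteratedDerivWithin_univ, ← iteratedDerivWithin_univ]
  exact iteratedDerivWithin_const_add hn c

lemma sublevel_measure (r : ℕ) (hr : 1 ≤ r) (I : Set ℝ) (hI : I.OrdConnected)
    (f : ℝ → ℝ) (κ : ℝ) (hκ : 0 < κ) (hsm : ContDiffOn ℝ r f I)
    (hder : ∀ t ∈ I, κ ≤ |iteratedDerivWithin r f I t|)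
    (c0 : ℝ) (lam : ℝ) (hlam : 0 ≤ lam) :
    volume {t | t ∈ I ∧ |c0 + f t| ≤ lam}
      ≤ ENNReal.ofReal (r * (((r + 1).factorial : ℝ) * lam / κ) ^ ((1 : ℝ) / r)) := by
  have hrpos : (0 : ℝ) < r := by exact_mod_cast hr
  obtain ⟨ρ, hρdef⟩ : ∃ ρ : ℝ, ρ = (((r + 1).factorial : ℝ) * lam / κ) ^ ((1 : ℝ) / r) :=
    ⟨_, rfl⟩
  have hXnn : 0 ≤ ((r + 1).factorial : ℝ) * lam / κ := by positivity
  have hρnn : 0 ≤ ρ := hρdef ▸ Real.rpow_nonneg hXnn _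
  obtain ⟨B, hBdef⟩ : ∃ B : ℝ, B = r * ρ := ⟨_, rfl⟩
  have hBnn : 0 ≤ B := by rw [hBdef]; positivity
  obtain ⟨E, hE⟩ : ∃ E : Set ℝ, E = {t | t ∈ I ∧ |c0 + f t| ≤ lam} := ⟨_, rfl⟩
  rw [← hE]
  have hgoal : (r : ℝ) * (((r + 1).factorial : ℝ) * lam / κ) ^ ((1 : ℝ) / r) = B := by
    rw [hBdef, hρdef]
  rw [hgoal]
  have hcover : E = ⋃ n : ℕ, E ∩ Set.Icc (-(n : ℝ)) n := by
    ext t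
    simp only [Set.mem_iUnion, Set.mem_inter_iff, Set.mem_Icc]
    constructor
    · intro ht
      have h1 : |t| ≤ (⌈|t|⌉₊ : ℝ) := Nat.le_ceil _
      obtain ⟨hl, hr'⟩ := abs_le.mp h1
      exact ⟨⌈|t|⌉₊, ht, hl, hr'⟩
    · rintro ⟨n, ht, _⟩
      exact ht
  have hmonoU : Monotone (fun n : ℕ => E ∩ Set.Icc (-(n : ℝ)) n) := by
    intro a b hab
    have hab' : (a : ℝ) ≤ b := by exact_mod_cast hab
    exact Set.inter_subset_inter_right _ (Set.Icc_subset_Icc (by linarith) hab')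
  rw [hcover, hmonoU.measure_iUnion]
  refine iSup_le fun n => ?_
  obtain ⟨E', hE'⟩ : ∃ E' : Set ℝ, E' = E ∩ Set.Icc (-(n : ℝ)) n := ⟨_, rfl⟩
  rw [← hE']
  have hfin : volume E' ≠ ⊤ := by
    have h1 : volume E' ≤ volume (Set.Icc (-(n : ℝ)) n) :=
      measure_mono (by rw [hE']; exact Set.inter_subset_right)
    exact ne_top_of_le_ne_top (by simp [Real.volume_Icc]) h1
  obtain ⟨W, hW⟩ : ∃ W : ℝ, W = (volume E').toReal := ⟨_, rfl⟩
  have hWnn : 0 ≤ W := hW ▸ ENNReal.toReal_nonneg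
  suffices hWB : W ≤ B by
    calc volume E' = ENNReal.ofReal W := by rw [hW, ENNReal.ofReal_toReal hfin]
    _ ≤ _ := ENNReal.ofReal_le_ofReal hWB
  by_contra hWB
  push_neg at hWB
  obtain ⟨L, hL⟩ : ∃ L : ℝ, L = (B + W) / 2 := ⟨_, rfl⟩
  have hBL : B < L := by rw [hL]; linarith
  have hLW : L < W := by rw [hL]; linarith
  have hLpos : 0 < L := lt_of_le_of_lt hBnn hBL
  -- the distribution function
  obtain ⟨F, hF⟩ : ∃ F : ℝ → ℝ, F = fun t => (volume (E' ∩ Set.Iio t)).toReal := ⟨_, rfl⟩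
  have hfinF : ∀ t, volume (E' ∩ Set.Iio t) ≠ ⊤ := fun t =>
    ne_top_of_le_ne_top hfin (measure_mono Set.inter_subset_left)
  have hFmono : Monotone F := by
    intro a b hab
    rw [hF]
    exact ENNReal.toReal_mono (hfinF b)
      (measure_mono (Set.inter_subset_inter_right _ (Set.Iio_subset_Iio hab)))
  have hFlip : ∀ a b : ℝ, a ≤ b → F b ≤ F a + (b - a) := by
    intro a b hab
    have hsub : E' ∩ Set.Iio b ⊆ (E' ∩ Set.Iio a) ∪ Set.Ico a b := by
      rintro t ⟨ht, htb⟩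
      rcases lt_or_ge t a with h | h
      · exact Or.inl ⟨ht, h⟩
      · exact Or.inr ⟨h, htb⟩
    rw [hF]
    calc (volume (E' ∩ Set.Iio b)).toReal
        ≤ ((volume (E' ∩ Set.Iio a)) + volume (Set.Ico a b)).toReal := by
          apply ENNReal.toReal_mono
          · exact ENNReal.add_ne_top.mpr ⟨hfinF a, by simp [Real.volume_Ico]⟩
          · exact le_trans (measure_mono hsub) (measure_union_le _ _)
    _ = (volume (E' ∩ Set.Iio a)).toReal + (b - a) := by
          rw [ENNReal.toReal_add (hfinF a) (by simp [Real.volume_Ico]), Real.volume_Ico,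
            ENNReal.toReal_ofReal (by linarith)]
  have hFgap : ∀ a b : ℝ, F b - F a ≤ (volume (E' ∩ Set.Ico a b)).toReal := by
    intro a b
    have hsub : E' ∩ Set.Iio b ⊆ (E' ∩ Set.Iio a) ∪ (E' ∩ Set.Ico a b) := by
      rintro t ⟨ht, htb⟩
      rcases lt_or_ge t a with h | h
      · exact Or.inl ⟨ht, h⟩
      · exact Or.inr ⟨ht, h, htb⟩
    have hfin2 : volume (E' ∩ Set.Ico a b) ≠ ⊤ :=
      ne_top_of_le_ne_top hfin (measure_mono Set.inter_subset_left)
    have h2 : F b ≤ F a + (volume (E' ∩ Set.Ico a b)).toReal := by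
      rw [hF]
      calc (volume (E' ∩ Set.Iio b)).toReal
          ≤ ((volume (E' ∩ Set.Iio a)) + volume (E' ∩ Set.Ico a b)).toReal := by
            apply ENNReal.toReal_mono (ENNReal.add_ne_top.mpr ⟨hfinF a, hfin2⟩)
            exact le_trans (measure_mono hsub) (measure_union_le _ _)
      _ = _ := ENNReal.toReal_add (hfinF a) hfin2
    linarith
  have hFtop : F ((n : ℝ) + 1) = W := by
    have heq : E' ∩ Set.Iio ((n : ℝ) + 1) = E' := by
      apply Set.inter_eq_self_of_subset_left
      intro t ht
      rw [hE'] at ht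
      have := ht.2.2
      simp only [Set.mem_Iio]
      linarith
    rw [hF]
    simp only [heq, hW]
  have hFbot : ∀ t : ℝ, t ≤ -(n : ℝ) → F t = 0 := by
    intro t ht
    have heq : E' ∩ Set.Iio t = ∅ := by
      ext u
      simp only [Set.mem_inter_iff, Set.mem_empty_iff_false, iff_false]
      rintro ⟨hu, hut⟩
      rw [hE'] at hu
      have := hu.2.1
      simp only [Set.mem_Iio] at hut
      linarith
    rw [hF]
    simp [heq]
  -- selection of points
  obtain ⟨c, hc⟩ : ∃ c : ℝ, c = (W - L) / 2 := ⟨_, rfl⟩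
  have hcpos : 0 < c := by rw [hc]; linarith
  obtain ⟨v, hv⟩ : ∃ v : ℕ → ℝ, v = fun j : ℕ => c + j * (L / r) := ⟨_, rfl⟩
  have hvmono : ∀ i j : ℕ, i ≤ j → v i ≤ v j := by
    intro i j hij
    have hij' : (i : ℝ) ≤ j := by exact_mod_cast hij
    have hLr : 0 ≤ L / r := le_of_lt (div_pos hLpos hrpos)
    rw [hv]
    simp only
    nlinarith
  have hvpos : ∀ j : ℕ, 0 < v j := by
    intro j
    rw [hv]
    simp only
    have : (0:ℝ) ≤ (j:ℝ) * (L / r) := by positivity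
    linarith
  have hvr : ∀ j : ℕ, j ≤ r → v j ≤ W := by
    intro j hj
    have h1 : v j ≤ v r := hvmono j r hj
    have h2 : v r = c + L := by
      rw [hv]
      simp only
      field_simp
    have h3 : c + L ≤ W := by rw [hc]; linarith
    linarith [h1, h2 ▸ h1]
  obtain ⟨A, hA⟩ : ∃ A : ℕ → Set ℝ, A = fun j => {t : ℝ | v j ≤ F t} := ⟨_, rfl⟩
  have hTA : ∀ j : ℕ, j ≤ r → ((n : ℝ) + 1) ∈ A j := by
    intro j hj
    rw [hA]
    simp only [Set.mem_setOf_eq, hFtop]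
    exact hvr j hj
  have hAne : ∀ j : ℕ, j ≤ r → (A j).Nonempty := fun j hj => ⟨_, hTA j hj⟩
  have hAbdd : ∀ j : ℕ, BddBelow (A j) := by
    intro j
    refine ⟨-(n : ℝ), fun t ht => ?_⟩
    by_contra hlt'
    push_neg at hlt'
    have h0 : F t = 0 := hFbot t (le_of_lt hlt')
    have htA : v j ≤ F t := by rw [hA] at ht; exact ht
    rw [h0] at htA
    linarith [hvpos j]
  obtain ⟨p, hp⟩ : ∃ p : ℕ → ℝ, p = fun j => sInf (A j) := ⟨_, rfl⟩
  have hinfeq : ∀ j, sInf (A j) = p j := by intro j; rw [hp]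
  have hFt : ∀ j : ℕ, j ≤ r → F (p j) = v j := by
    intro j hj
    have hge : v j ≤ F (p j) := by
      by_contra hlt'
      push_neg at hlt'
      have hεpos : 0 < (v j - F (p j)) / 2 := by linarith
      obtain ⟨z, hzA, hzlt⟩ := exists_lt_of_csInf_lt (hAne j hj)
        (show sInf (A j) < p j + (v j - F (p j)) / 2 by rw [hinfeq j]; linarith)
      have h1 : v j ≤ F z := by rw [hA] at hzA; exact hzA
      have h2 : F z ≤ F (p j + (v j - F (p j)) / 2) := hFmono (le_of_lt hzlt)
      have h3 := hFlip (p j) (p j + (v j - F (p j)) / 2) (by linarith)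
      linarith
    have hle : F (p j) ≤ v j := by
      by_contra hlt'
      push_neg at hlt'
      have hεpos : 0 < (F (p j) - v j) / 2 := by linarith
      have hnm : (p j - (F (p j) - v j) / 2) ∉ A j :=
        notMem_of_lt_csInf (by rw [hinfeq j]; linarith) (hAbdd j)
      have h1 : F (p j - (F (p j) - v j) / 2) < v j := by
        by_contra hge'
        push_neg at hge'
        exact hnm (by rw [hA]; exact hge')
      have h2 := hFlip (p j - (F (p j) - v j) / 2) (p j) (by linarith)
      linarith
    linarith
  have hpmono : ∀ i j : ℕ, i ≤ j → j ≤ r → p i ≤ p j := by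
    intro i j hij hjr
    rw [← hinfeq i, ← hinfeq j]
    refine csInf_le_csInf (hAbdd i) (hAne j hjr) (fun t ht => ?_)
    rw [hA] at ht ⊢
    exact le_trans (hvmono i j hij) ht
  have hpspace : ∀ i j : ℕ, i ≤ j → j ≤ r → v j - v i ≤ p j - p i := by
    intro i j hij hjr
    have h1 := hFlip (p i) (p j) (hpmono i j hij hjr)
    rw [hFt i (le_trans hij hjr), hFt j hjr] at h1
    linarith
  have hpick : ∀ ε : ℝ, 0 < ε → ∀ j : ℕ, j ≤ r → ∃ s, s ∈ E' ∧ p j - ε ≤ s ∧ s ≤ p j := by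
    intro ε hε j hj
    have hnm : (p j - ε) ∉ A j := notMem_of_lt_csInf (by rw [hinfeq j]; linarith) (hAbdd j)
    have h1 : F (p j - ε) < v j := by
      by_contra hge'
      push_neg at hge'
      exact hnm (by rw [hA]; exact hge')
    have h2 : 0 < (volume (E' ∩ Set.Ico (p j - ε) (p j))).toReal := by
      have := hFgap (p j - ε) (p j)
      rw [hFt j hj] at this
      linarith
    have h3 : volume (E' ∩ Set.Ico (p j - ε) (p j)) ≠ 0 := by
      intro h0
      rw [h0] at h2
      simp at h2
    obtain ⟨z, hz⟩ := nonempty_of_measure_ne_zero h3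
    exact ⟨z, hz.1, hz.2.1, le_of_lt hz.2.2⟩
  -- choose ε and the points
  have hLrρ : ρ < L / r := by
    rw [lt_div_iff₀ hrpos]
    calc ρ * r = r * ρ := mul_comm _ _
    _ = B := hBdef.symm
    _ < L := hBL
  obtain ⟨ε, hεdef⟩ : ∃ ε : ℝ, ε = min (L / (2 * r)) ((L / r - ρ) / 2) := ⟨_, rfl⟩
  have hεpos : 0 < ε := by
    rw [hεdef]
    apply lt_min
    · positivity
    · linarith
  obtain ⟨d, hd⟩ : ∃ d : ℝ, d = L / r - ε := ⟨_, rfl⟩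
  have hdρ : ρ < d := by
    have h1 : ε ≤ (L / r - ρ) / 2 := hεdef ▸ min_le_right _ _
    rw [hd]
    linarith
  have hdpos : 0 < d := lt_of_le_of_lt hρnn hdρ
  have hchoice : ∀ j : ℕ, ∃ z : ℝ, j ≤ r → z ∈ E' ∧ p j - ε ≤ z ∧ z ≤ p j := by
    intro j
    by_cases hj : j ≤ r
    · obtain ⟨z, hz⟩ := hpick ε hεpos j hj
      exact ⟨z, fun _ => hz⟩
    · exact ⟨0, fun h => absurd h hj⟩
  choose s hs using hchoice
  have hspace : ∀ i j : ℕ, i < j → j ≤ r → ((j : ℝ) - i) * d ≤ s j - s i := by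
    intro i j hij hjr
    have hvd : v j - v i = ((j : ℝ) - i) * (L / r) := by
      rw [hv]
      simp only
      ring
    have h1 := hpspace i j (le_of_lt hij) hjr
    have h2 := (hs i (le_trans (le_of_lt hij) hjr)).2
    have h3 := (hs j hjr).2
    have hji1 : (1 : ℝ) ≤ (j : ℝ) - i := by
      have : (i : ℝ) + 1 ≤ j := by exact_mod_cast hij
      linarith
    have h4 : ((j : ℝ) - i) * (L / r) - ε ≤ s j - s i := by
      rw [← hvd]
      linarith [h2.1, h2.2, h3.1, h3.2]
    have h5 : ((j : ℝ) - i) * d = ((j : ℝ) - i) * (L / r) - ((j : ℝ) - i) * ε := by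
      rw [hd]; ring
    nlinarith
  have hslt : ∀ i : ℕ, i < r → s i < s (i + 1) := by
    intro i hi
    have h1 := hspace i (i + 1) (by omega) (by omega)
    push_cast at h1
    nlinarith
  have hsmemE : ∀ i : ℕ, i ≤ r → s i ∈ E := by
    intro i hi
    have := (hs i hi).1
    rw [hE'] at this
    exact this.1
  have hsmemI : ∀ i : ℕ, i ≤ r → s i ∈ I := by
    intro i hi
    have := hsmemE i hi
    rw [hE] at this
    exact this.1
  have hsf : ∀ i : ℕ, i ≤ r → |c0 + f (s i)| ≤ lam := by
    intro i hi
    have := hsmemE i hi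
    rw [hE] at this
    exact this.2
  -- divided differences
  obtain ⟨ξ, hξIoo, hξeq⟩ := exists_divided_diff I hI r hr (fun t => c0 + f t)
    (contDiffOn_const.add hsm) s hslt hsmemI
  have hξI : ξ ∈ I := by
    have hsub : Set.Icc (s 0) (s r) ⊆ I := hI.out (hsmemI 0 (by omega)) (hsmemI r le_rfl)
    exact hsub (Set.Ioo_subset_Icc_self hξIoo)
  have hξint : ξ ∈ interior I := by
    have hIoosub : Set.Ioo (s 0) (s r) ⊆ I := fun t ht =>
      (hI.out (hsmemI 0 (by omega)) (hsmemI r le_rfl)) (Set.Ioo_subset_Icc_self ht)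
    exact (isOpen_Ioo.subset_interior_iff.mpr hIoosub) hξIoo
  have hκξ : κ ≤ |iteratedDeriv r (fun t => c0 + f t) ξ| := by
    rw [iteratedDeriv_const_add' (by omega : 0 < r) c0 f ξ,
      ← iteratedDerivWithin_eq_interior hξint]
    exact hder ξ hξI
  -- bound the divided difference
  have hprodbound : ∀ j ∈ Finset.range (r + 1),
      |(c0 + f (s j)) * ∏ i ∈ (Finset.range (r + 1)).erase j, (s j - s i)⁻¹| ≤ lam / d ^ r := by
    intro j hj
    have hjr : j ≤ r := by simpa [Nat.lt_succ_iff] using hj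
    have hfactor : ∀ i ∈ (Finset.range (r + 1)).erase j, d ≤ |s j - s i| := by
      intro i hi
      have hine : i ≠ j := Finset.ne_of_mem_erase hi
      have hir : i ≤ r := by
        have := Finset.mem_of_mem_erase hi
        simpa [Nat.lt_succ_iff] using this
      rcases Nat.lt_or_ge i j with hij | hij
      · have h1 := hspace i j hij hjr
        have h2 : (1 : ℝ) ≤ (j : ℝ) - i := by
          have : (i : ℝ) + 1 ≤ j := by exact_mod_cast hij
          linarith
        have h3 : d ≤ s j - s i := by nlinarith
        exact le_trans h3 (le_abs_self _)
      · have hij' : j < i := by omega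
        have h1 := hspace j i hij' hir
        have h2 : (1 : ℝ) ≤ (i : ℝ) - j := by
          have : (j : ℝ) + 1 ≤ i := by exact_mod_cast hij'
          linarith
        have h3 : d ≤ s i - s j := by nlinarith
        calc d ≤ s i - s j := h3
        _ = |s j - s i| := by rw [abs_sub_comm]; exact (abs_of_nonneg (by linarith)).symm
    have hcard : ((Finset.range (r + 1)).erase j).card = r := by
      rw [Finset.card_erase_of_mem hj, Finset.card_range]
      omega
    have hprodge : d ^ r ≤ ∏ i ∈ (Finset.range (r + 1)).erase j, |s j - s i| := by
      calc d ^ r = ∏ _i ∈ (Finset.range (r + 1)).erase j, d := by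
            rw [Finset.prod_const, hcard]
      _ ≤ _ := Finset.prod_le_prod (fun _ _ => le_of_lt hdpos) hfactor
    have habsprod : |∏ i ∈ (Finset.range (r + 1)).erase j, (s j - s i)⁻¹|
        = (∏ i ∈ (Finset.range (r + 1)).erase j, |s j - s i|)⁻¹ := by
      rw [Finset.abs_prod, ← Finset.prod_inv_distrib]
      exact Finset.prod_congr rfl fun i _ => abs_inv _
    rw [abs_mul, habsprod]
    calc |c0 + f (s j)| * (∏ i ∈ (Finset.range (r + 1)).erase j, |s j - s i|)⁻¹
        ≤ lam * (d ^ r)⁻¹ := by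
          apply mul_le_mul (hsf j hjr) ?_ (by positivity) hlam
          exact inv_anti₀ (pow_pos hdpos r) hprodge
    _ = lam / d ^ r := by rw [div_eq_mul_inv]
  have hsumbound : |∑ j ∈ Finset.range (r + 1),
      (c0 + f (s j)) * ∏ i ∈ (Finset.range (r + 1)).erase j, (s j - s i)⁻¹|
      ≤ ((r : ℝ) + 1) * (lam / d ^ r) := by
    calc _ ≤ ∑ j ∈ Finset.range (r + 1),
        |(c0 + f (s j)) * ∏ i ∈ (Finset.range (r + 1)).erase j, (s j - s i)⁻¹| :=
          Finset.abs_sum_le_sum_abs _ _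
    _ ≤ ∑ _j ∈ Finset.range (r + 1), (lam / d ^ r) := Finset.sum_le_sum hprodbound
    _ = ((r : ℝ) + 1) * (lam / d ^ r) := by
        rw [Finset.sum_const, Finset.card_range, nsmul_eq_mul]
        push_cast
        ring
  have hκbound : κ ≤ (r.factorial : ℝ) * (((r : ℝ) + 1) * (lam / d ^ r)) := by
    rw [hξeq] at hκξ
    calc κ ≤ |(r.factorial : ℝ) * ∑ j ∈ Finset.range (r + 1),
        (c0 + f (s j)) * ∏ i ∈ (Finset.range (r + 1)).erase j, (s j - s i)⁻¹| := hκξ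
    _ = (r.factorial : ℝ) * |∑ j ∈ Finset.range (r + 1),
        (c0 + f (s j)) * ∏ i ∈ (Finset.range (r + 1)).erase j, (s j - s i)⁻¹| := by
          rw [abs_mul, abs_of_nonneg (by positivity : (0:ℝ) ≤ (r.factorial : ℝ))]
    _ ≤ _ := mul_le_mul_of_nonneg_left hsumbound (by positivity)
  have hfact : (r.factorial : ℝ) * ((r : ℝ) + 1) = ((r + 1).factorial : ℝ) := by
    rw [Nat.factorial_succ]
    push_cast
    ring
  have hdrpos : (0:ℝ) < d ^ r := pow_pos hdpos r
  have hdr : d ^ r ≤ ((r + 1).factorial : ℝ) * lam / κ := by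
    rw [le_div_iff₀ hκ]
    have h3 := mul_le_mul_of_nonneg_right hκbound (le_of_lt hdrpos)
    have h4 : ((r.factorial : ℝ) * (((r : ℝ) + 1) * (lam / d ^ r))) * d ^ r
        = ((r + 1).factorial : ℝ) * lam := by
      rw [← hfact]
      field_simp
    linarith
  have hρr : ρ ^ r = ((r + 1).factorial : ℝ) * lam / κ := by
    rw [hρdef, ← Real.rpow_natCast ((((r + 1).factorial : ℝ) * lam / κ) ^ ((1:ℝ)/r)) r,
      ← Real.rpow_mul hXnn, one_div, inv_mul_cancel₀ (ne_of_gt hrpos), Real.rpow_one]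
  have hdρ' : d ≤ ρ := by
    apply le_of_pow_le_pow_left₀ (by omega : r ≠ 0) hρnn
    rw [hρr]
    exact hdr
  linarith

lemma two_pow_aux : ∀ m : ℕ, 2 ≤ m → m + 2 ≤ 2 ^ m := by
  intro m
  induction m with
  | zero => omega
  | succ k ih =>
    intro hk
    rcases Nat.lt_or_ge k 2 with h2 | h2
    · interval_cases k <;> simp_all <;> omega
    · have h3 := ih h2
      have h4 : 1 ≤ 2 ^ k := Nat.one_le_two_pow
      calc k + 1 + 2 ≤ 2 ^ k + 2 ^ k := by omega
      _ = 2 ^ (k + 1) := by ring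
lemma key_nat : ∀ r : ℕ, 1 ≤ r → 3 * r ^ r * (r + 1) ≤ 2 ^ (r * (r - 1) + 4) := by
  intro r
  induction r with
  | zero => omega
  | succ m ih =>
    intro _
    rcases Nat.lt_or_ge m 2 with hm | hm
    · interval_cases m <;> decide
    · have ihm := ih (by omega)
      have h1 : (m + 1) ^ m ≤ 2 ^ m * m ^ m := by
        calc (m + 1) ^ m ≤ (2 * m) ^ m := Nat.pow_le_pow_left (by omega) m
        _ = 2 ^ m * m ^ m := by rw [Nat.mul_pow]
      have h2 : m + 2 ≤ 2 ^ m := two_pow_aux m hm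
      obtain ⟨k, rfl⟩ : ∃ k, m = k + 1 := ⟨m - 1, by omega⟩
      have hexp : (k + 1) * (k + 1 - 1) + 4 + ((k + 1) + (k + 1))
          = (k + 1 + 1) * (k + 1 + 1 - 1) + 4 := by
        simp only [Nat.add_sub_cancel]
        ring
      calc 3 * (k + 1 + 1) ^ (k + 1 + 1) * (k + 1 + 1 + 1)
          = (3 * (k + 1 + 1) ^ (k + 1) * (k + 1 + 1)) * (k + 1 + 1 + 1) := by ring
      _ ≤ (3 * (2 ^ (k + 1) * (k + 1) ^ (k + 1)) * (k + 1 + 1)) * (k + 1 + 1 + 1) := by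
            apply Nat.mul_le_mul_right
            apply Nat.mul_le_mul_right
            exact Nat.mul_le_mul_left 3 h1
      _ = (3 * (k + 1) ^ (k + 1) * (k + 1 + 1)) * (2 ^ (k + 1) * (k + 1 + 2)) := by ring
      _ ≤ 2 ^ ((k + 1) * (k + 1 - 1) + 4) * (2 ^ (k + 1) * 2 ^ (k + 1)) := by
            apply Nat.mul_le_mul ihm
            exact Nat.mul_le_mul_left _ h2
      _ = 2 ^ ((k + 1) * (k + 1 - 1) + 4 + ((k + 1) + (k + 1))) := by
            rw [pow_add, pow_add, pow_add, pow_add]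
            ring
      _ = 2 ^ ((k + 1 + 1) * (k + 1 + 1 - 1) + 4) := by rw [hexp]

lemma rpow_pull (r : ℕ) (hr : 1 ≤ r) (x y : ℝ) (hx : 0 ≤ x) (hy : 0 ≤ y) :
    x * y ^ ((1 : ℝ) / r) = (x ^ r * y) ^ ((1 : ℝ) / r) := by
  have hrne : (r : ℝ) ≠ 0 := by
    have : (0 : ℝ) < r := by exact_mod_cast hr
    exact ne_of_gt this
  rw [Real.mul_rpow (pow_nonneg hx r) hy]
  congr 1
  rw [← Real.rpow_natCast x r, ← Real.rpow_mul hx, mul_one_div, div_self hrne, Real.rpow_one]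

lemma key_real (r : ℕ) (hr : 1 ≤ r) (κ hbar : ℝ) (hκ : 0 < κ) (hhb : 0 < hbar) :
    (r : ℝ) * (((r + 1).factorial : ℝ) * (3 * hbar / 4) / κ) ^ ((1 : ℝ) / r)
      ≤ 2 ^ (r - 1) * (2 * (r.factorial : ℝ) / κ) ^ ((1 : ℝ) / r)
          * (2 * hbar) ^ ((1 : ℝ) / r) := by
  have hrpos : (0 : ℝ) < r := by exact_mod_cast hr
  have ha : (0 : ℝ) ≤ ((r + 1).factorial : ℝ) * (3 * hbar / 4) / κ := by positivity
  have hb1 : (0 : ℝ) ≤ 2 * (r.factorial : ℝ) / κ := by positivity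
  have hb2 : (0 : ℝ) ≤ 2 * hbar := by positivity
  rw [mul_assoc, ← Real.mul_rpow hb1 hb2]
  rw [rpow_pull r hr ((r : ℝ)) _ (le_of_lt hrpos) ha,
    rpow_pull r hr ((2 : ℝ) ^ (r - 1)) _ (by positivity) (by positivity)]
  apply Real.rpow_le_rpow (by positivity) ?_ (by positivity)
  -- core inequality
  have hfs : ((r + 1).factorial : ℝ) = ((r : ℝ) + 1) * (r.factorial : ℝ) := by
    rw [Nat.factorial_succ]
    push_cast
    ring
  have hcast : (3 : ℝ) * (r : ℝ) ^ r * ((r : ℝ) + 1) ≤ 2 ^ (r * (r - 1) + 4) := by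
    exact_mod_cast key_nat r hr
  have hexp2 : ((2 : ℝ) ^ (r - 1)) ^ r = 2 ^ ((r - 1) * r) := by rw [← pow_mul]
  have hexp3 : (2 : ℝ) ^ (r * (r - 1) + 4) = 2 ^ ((r - 1) * r) * 16 := by
    rw [pow_add, Nat.mul_comm r (r - 1)]
    norm_num
  rw [hexp2, hfs]
  have hfac : (0 : ℝ) < (r.factorial : ℝ) := by exact_mod_cast Nat.factorial_pos r
  rw [hexp3] at hcast
  have key : (r : ℝ) ^ r * (((r : ℝ) + 1) * (r.factorial : ℝ) * (3 * hbar / 4))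
      ≤ 2 ^ ((r - 1) * r) * (2 * (r.factorial : ℝ) * (2 * hbar)) := by
    nlinarith [mul_le_mul_of_nonneg_right hcast
        (le_of_lt (show (0:ℝ) < hbar * (r.factorial : ℝ) / 4 by positivity))]
  calc (r : ℝ) ^ r * (((r : ℝ) + 1) * (r.factorial : ℝ) * (3 * hbar / 4) / κ)
      = ((r : ℝ) ^ r * (((r : ℝ) + 1) * (r.factorial : ℝ) * (3 * hbar / 4))) / κ := by ring
  _ ≤ (2 ^ ((r - 1) * r) * (2 * (r.factorial : ℝ) * (2 * hbar))) / κ :=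
        by gcongr 
  _ = 2 ^ ((r - 1) * r) * (2 * (r.factorial : ℝ) / κ * (2 * hbar)) := by ring



end auxiliary

theorem damped_integral_bound
    (r : ℕ) (hr : 1 ≤ r) (I : Set ℝ) (hI : I.OrdConnected)
    (h : ℝ → ℝ) (κ : ℝ) (hκ : 0 < κ)
    (hsm : ContDiffOn ℝ r h I)
    (hder : ∀ t ∈ I, κ ≤ |iteratedDerivWithin r h I t|)
    (ψ : ℝ → ℝ) (M : ℝ) (hM : 0 < M)
    (hψm : Measurable ψ) (hψb : ∀ t, |ψ t| ≤ M)
    (hψs : Function.support ψ ⊆ I)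
    (β : ℝ → ℝ) (hβm : Measurable β)
    (hβs : Function.support β ⊆ Set.Icc (1 / 2) 2)
    (hβb : ∀ s, |β s| ≤ 1)
    (hbar : ℝ) (hhb : 0 < hbar) :
    (∫ t in I, |ψ t * β (hbar⁻¹ * h t)|)
      ≤ 2 ^ (r - 1) * M * (2 * (r.factorial : ℝ) / κ) ^ ((1 : ℝ) / r)
          * (2 * hbar) ^ ((1 : ℝ) / r) := by
  have hImeas : MeasurableSet I := hI.measurableSet
  set ν := volume.restrict I with hν
  -- the sublevel set
  set E : Set ℝ := {t | t ∈ I ∧ |(-(5 * hbar / 4)) + h t| ≤ 3 * hbar / 4} with hE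
  have hEbound : volume E ≤ ENNReal.ofReal
      ((r : ℝ) * (((r + 1).factorial : ℝ) * (3 * hbar / 4) / κ) ^ ((1 : ℝ) / r)) :=
    sublevel_measure r hr I hI h κ hκ hsm hder (-(5 * hbar / 4)) (3 * hbar / 4) (by positivity)
  set Bρ : ℝ := (r : ℝ) * (((r + 1).factorial : ℝ) * (3 * hbar / 4) / κ) ^ ((1 : ℝ) / r)
    with hBρ
  have hBρnn : 0 ≤ Bρ := by
    rw [hBρ]
    positivity
  have hEfin : volume E ≠ ⊤ := ne_top_of_le_ne_top ENNReal.ofReal_ne_top hEbound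
  -- measurable hull
  set E₂ : Set ℝ := toMeasurable volume E with hE₂
  have hE₂meas : MeasurableSet E₂ := measurableSet_toMeasurable _ _
  have hE₂vol : volume E₂ = volume E := measure_toMeasurable _
  have hE₂fin : volume E₂ ≠ ⊤ := by rw [hE₂vol]; exact hEfin
  -- dominating function
  set u : ℝ → ℝ := E₂.indicator (fun _ => M) with hu
  have huint : Integrable u volume := by
    rw [hu, integrable_indicator_iff hE₂meas]
    exact integrableOn_const hE₂fin
  have huintν : Integrable u ν := huint.restrict
  have hunn : ∀ t, 0 ≤ u t := by
    intro t
    rw [hu]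
    exact Set.indicator_nonneg (fun _ _ => le_of_lt hM) t
  -- pointwise bound on I
  have hpt : ∀ t ∈ I, |ψ t * β (hbar⁻¹ * h t)| ≤ u t := by
    intro t ht
    by_cases hβ0 : β (hbar⁻¹ * h t) = 0
    · rw [hβ0, mul_zero, abs_zero]
      exact hunn t
    · have hmem : hbar⁻¹ * h t ∈ Set.Icc (1 / 2 : ℝ) 2 :=
        hβs (Function.mem_support.mpr hβ0)
      have h1 : (1 / 2 : ℝ) ≤ hbar⁻¹ * h t := hmem.1
      have h2 : hbar⁻¹ * h t ≤ 2 := hmem.2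
      have hhbne : hbar ≠ 0 := ne_of_gt hhb
      have hth : hbar * (hbar⁻¹ * h t) = h t := by field_simp
      have h3 : hbar / 2 ≤ h t := by
        have hmul := mul_le_mul_of_nonneg_left h1 (le_of_lt hhb)
        linarith [hmul, hth]
      have h4 : h t ≤ 2 * hbar := by
        have hmul := mul_le_mul_of_nonneg_left h2 (le_of_lt hhb)
        linarith [hmul, hth]
      have htE : t ∈ E := by
        rw [hE]
        refine ⟨ht, ?_⟩
        rw [abs_le]
        constructor <;> linarith
      have htE₂ : t ∈ E₂ := subset_toMeasurable _ _ htE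
      have huval : u t = M := by rw [hu, Set.indicator_of_mem htE₂]
      rw [huval, abs_mul]
      calc |ψ t| * |β (hbar⁻¹ * h t)| ≤ M * 1 :=
        mul_le_mul (hψb t) (hβb _) (abs_nonneg _) (le_of_lt hM)
      _ = M := mul_one M
  -- integrability of the integrand
  have hham : AEMeasurable h ν := (hsm.continuousOn).aemeasurable hImeas
  have hGmeas : AEStronglyMeasurable (fun t => |ψ t * β (hbar⁻¹ * h t)|) ν := by
    have hprod : AEMeasurable (fun t => ψ t * β (hbar⁻¹ * h t)) ν :=
      (hψm.aemeasurable).mul (hβm.comp_aemeasurable (aemeasurable_const.mul hham))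
    exact ((measurable_abs.comp_aemeasurable hprod)).aestronglyMeasurable
  have hptae : ∀ᵐ t ∂ν, |ψ t * β (hbar⁻¹ * h t)| ≤ u t :=
    (ae_restrict_iff' hImeas).mpr (Filter.Eventually.of_forall hpt)
  have hGint : Integrable (fun t => |ψ t * β (hbar⁻¹ * h t)|) ν := by
    apply Integrable.mono' huintν hGmeas
    filter_upwards [hptae] with t ht
    rwa [Real.norm_eq_abs, abs_abs]
  -- the chain of bounds
  have hstep1 : (∫ t in I, |ψ t * β (hbar⁻¹ * h t)|) ≤ ∫ t, u t ∂ν :=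
    integral_mono_ae hGint huintν hptae
  have hstep2 : (∫ t, u t ∂ν) ≤ ∫ t, u t := by
    apply integral_mono_measure Measure.restrict_le_self
    · exact Filter.Eventually.of_forall hunn
    · exact huint
  have hstep3 : (∫ t, u t) = M * (volume E₂).toReal := by
    rw [hu, integral_indicator_const _ hE₂meas]
    simp [mul_comm, Measure.real]
  have hstep4 : (volume E₂).toReal ≤ Bρ := by
    rw [hE₂vol]
    exact ENNReal.toReal_le_of_le_ofReal hBρnn hEbound
  have hfinal : (∫ t in I, |ψ t * β (hbar⁻¹ * h t)|) ≤ M * Bρ := by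
    calc (∫ t in I, |ψ t * β (hbar⁻¹ * h t)|) ≤ ∫ t, u t ∂ν := hstep1
    _ ≤ ∫ t, u t := hstep2
    _ = M * (volume E₂).toReal := hstep3
    _ ≤ M * Bρ := mul_le_mul_of_nonneg_left hstep4 (le_of_lt hM)
  calc (∫ t in I, |ψ t * β (hbar⁻¹ * h t)|) ≤ M * Bρ := hfinal
  _ ≤ M * (2 ^ (r - 1) * (2 * (r.factorial : ℝ) / κ) ^ ((1 : ℝ) / r)
        * (2 * hbar) ^ ((1 : ℝ) / r)) := by
      apply mul_le_mul_of_nonneg_left ?_ (le_of_lt hM)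
      rw [hBρ]
      exact key_real r hr κ hbar hκ hhb
  _ = 2 ^ (r - 1) * M * (2 * (r.factorial : ℝ) / κ) ^ ((1 : ℝ) / r)
        * (2 * hbar) ^ ((1 : ℝ) / r) := by ring
end
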